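/- arXiv:2212.01563 — 3 statements merged into one kernel-verified Lean document; each statement's English description precedes it below -/
import Mathlib

section
/- Cross-correlation and variance of IRS-assisted channel samples (Theorem 1). Assume the family (h, u, v, Φ₁, Φ₂, n₁, n₂) is mutually independent, h, n₁, n₂ and every coordinate of u and v are square-integrable with zero mean, E[|h|²] = β, E[|n₁|²] = E[|n₂|²] = σ², and E[n₁ · conj(n₂)] = 0. Then the channel samples s₁ and s₂ satisfy: (i) E[s₁ · conj(s₂)] = β + trace(R_u · (E[Φ₂])ᴴ · R_v · E[Φ₁]), where E[Φ_p] denotes the entrywise expectation of Φ_p; and (ii) for each l ∈ {1, 2}, E[|s_l|²] = β + E[trace(R_u · (Φ_l)ᴴ · R_v · Φ_l)] + σ². Consequently the correlation coefficient ρ = E[s₁ · conj(s₂)] / E[|s_l|²] equals (β + trace(R_u · (E[Φ₂])ᴴ · R_v · E[Φ₁])) / (β + E[trace(R_u · (Φ_l)ᴴ · R_v · Φ_l)] + σ²). -/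
open MeasureTheory ProbabilityTheory Matrix Complex
open scoped ENNReal

/-- Borel-type measurable space on matrices, induced from the pi-type structure. -/
noncomputable instance matrixMeasurableSpace {m n α : Type*} [MeasurableSpace α] :
    MeasurableSpace (Matrix m n α) :=
  inferInstanceAs (MeasurableSpace (m → n → α))

section Helpers

variable {Ω : Type*} [MeasurableSpace Ω] {μ : Measure Ω}

private lemma memLp_star' {f : Ω → ℂ} (hf : MemLp f 2 μ) :
    MemLp (fun ω => star (f ω)) 2 μ :=
  MemLp.of_le hf (continuous_star.comp_aestronglyMeasurable hf.1)
    (Filter.Eventually.of_forall fun ω => by simp)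

private lemma integrable_mul_L2' {f g : Ω → ℂ} (hf : MemLp f 2 μ) (hg : MemLp g 2 μ) :
    Integrable (fun ω => f ω * g ω) μ := by
  have h12 : (1 : ℝ≥0∞) / 1 = 1 / 2 + 1 / 2 := by
    rw [div_one]; exact (ENNReal.add_halves 1).symm
  exact memLp_one_iff_integrable.mp (MemLp.smul (r := 1) hg hf)

private lemma integrable_of_bound' [IsFiniteMeasure μ] {f : Ω → ℂ} (hf : Measurable f) (C : ℝ)
    (hC : ∀ ω, ‖f ω‖ ≤ C) : Integrable f μ :=
  ⟨hf.aestronglyMeasurable, HasFiniteIntegral.of_bounded (C := C) (Filter.Eventually.of_forall hC)⟩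

private lemma integrable_star' {f : Ω → ℂ} (hf : Integrable f μ) :
    Integrable (fun ω => star (f ω)) μ :=
  ⟨continuous_star.comp_aestronglyMeasurable hf.1, by
    simpa [HasFiniteIntegral] using hf.2⟩

end Helpers

section Prod7

variable {α₁ α₂ α₃ α₄ α₅ α₆ α₇ : Type*}
  [MeasurableSpace α₁] [MeasurableSpace α₂] [MeasurableSpace α₃] [MeasurableSpace α₄]
  [MeasurableSpace α₅] [MeasurableSpace α₆] [MeasurableSpace α₇]
  (μ₁ : Measure α₁) (μ₂ : Measure α₂) (μ₃ : Measure α₃) (μ₄ : Measure α₄)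
  (μ₅ : Measure α₅) (μ₆ : Measure α₆) (μ₇ : Measure α₇)
  [IsProbabilityMeasure μ₁] [IsProbabilityMeasure μ₂] [IsProbabilityMeasure μ₃]
  [IsProbabilityMeasure μ₄] [IsProbabilityMeasure μ₅] [IsProbabilityMeasure μ₆]
  [IsProbabilityMeasure μ₇]
  (f₁ : α₁ → ℂ) (f₂ : α₂ → ℂ) (f₃ : α₃ → ℂ) (f₄ : α₄ → ℂ) (f₅ : α₅ → ℂ)
  (f₆ : α₆ → ℂ) (f₇ : α₇ → ℂ)

set_option linter.unusedSectionVars false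

private lemma integral_prod7 :
    ∫ x, f₁ x.1 * (f₂ x.2.1 * (f₃ x.2.2.1 * (f₄ x.2.2.2.1 * (f₅ x.2.2.2.2.1 *
        (f₆ x.2.2.2.2.2.1 * f₇ x.2.2.2.2.2.2)))))
      ∂(μ₁.prod (μ₂.prod (μ₃.prod (μ₄.prod (μ₅.prod (μ₆.prod μ₇)))))) =
    (∫ x, f₁ x ∂μ₁) * ((∫ x, f₂ x ∂μ₂) * ((∫ x, f₃ x ∂μ₃) * ((∫ x, f₄ x ∂μ₄) *
      ((∫ x, f₅ x ∂μ₅) * ((∫ x, f₆ x ∂μ₆) * (∫ x, f₇ x ∂μ₇)))))) := by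
  have e1 := integral_prod_mul (μ := μ₁) (ν := μ₂.prod (μ₃.prod (μ₄.prod (μ₅.prod (μ₆.prod μ₇)))))
    f₁ (fun y => f₂ y.1 * (f₃ y.2.1 * (f₄ y.2.2.1 * (f₅ y.2.2.2.1 * (f₆ y.2.2.2.2.1 * f₇ y.2.2.2.2.2)))))
  rw [e1]; clear e1
  have e2 := integral_prod_mul (μ := μ₂) (ν := μ₃.prod (μ₄.prod (μ₅.prod (μ₆.prod μ₇))))
    f₂ (fun y => f₃ y.1 * (f₄ y.2.1 * (f₅ y.2.2.1 * (f₆ y.2.2.2.1 * f₇ y.2.2.2.2))))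
  rw [e2]; clear e2
  have e3 := integral_prod_mul (μ := μ₃) (ν := μ₄.prod (μ₅.prod (μ₆.prod μ₇)))
    f₃ (fun y => f₄ y.1 * (f₅ y.2.1 * (f₆ y.2.2.1 * f₇ y.2.2.2)))
  rw [e3]; clear e3
  have e4 := integral_prod_mul (μ := μ₄) (ν := μ₅.prod (μ₆.prod μ₇))
    f₄ (fun y => f₅ y.1 * (f₆ y.2.1 * f₇ y.2.2))
  rw [e4]; clear e4
  have e5 := integral_prod_mul (μ := μ₅) (ν := μ₆.prod μ₇)
    f₅ (fun y => f₆ y.1 * f₇ y.2)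
  rw [e5]; clear e5
  rw [integral_prod_mul]

private lemma integrable_prod7 (h₁ : Integrable f₁ μ₁) (h₂ : Integrable f₂ μ₂)
    (h₃ : Integrable f₃ μ₃) (h₄ : Integrable f₄ μ₄) (h₅ : Integrable f₅ μ₅)
    (h₆ : Integrable f₆ μ₆) (h₇ : Integrable f₇ μ₇) :
    Integrable (fun x => f₁ x.1 * (f₂ x.2.1 * (f₃ x.2.2.1 * (f₄ x.2.2.2.1 * (f₅ x.2.2.2.2.1 *
        (f₆ x.2.2.2.2.2.1 * f₇ x.2.2.2.2.2.2))))))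
      (μ₁.prod (μ₂.prod (μ₃.prod (μ₄.prod (μ₅.prod (μ₆.prod μ₇)))))) :=
  h₁.mul_prod (h₂.mul_prod (h₃.mul_prod (h₄.mul_prod (h₅.mul_prod (h₆.mul_prod h₇)))))

end Prod7

section Key

variable {Ω : Type*} [MeasurableSpace Ω] (μ : Measure Ω) [IsProbabilityMeasure μ]
  {N : ℕ}
  (h : Ω → ℂ) (u v : Ω → Fin N → ℂ) (Φ₀ Φ₁ : Ω → Matrix (Fin N) (Fin N) ℂ) (n₀ n₁ : Ω → ℂ)

set_option maxHeartbeats 1000000 in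
private lemma key_factorization
    (hhm : Measurable h) (hum : Measurable u) (hvm : Measurable v)
    (hΦ₀m : Measurable Φ₀) (hΦ₁m : Measurable Φ₁) (hn₀m : Measurable n₀) (hn₁m : Measurable n₁)
    (hindep : μ.map (fun ω => (h ω, u ω, v ω, Φ₀ ω, Φ₁ ω, n₀ ω, n₁ ω)) =
      (μ.map h).prod ((μ.map u).prod ((μ.map v).prod ((μ.map Φ₀).prod
        ((μ.map Φ₁).prod ((μ.map n₀).prod (μ.map n₁)))))))
    (f₁ : ℂ → ℂ) (f₂ f₃ : (Fin N → ℂ) → ℂ) (f₄ f₅ : Matrix (Fin N) (Fin N) ℂ → ℂ)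
    (f₆ f₇ : ℂ → ℂ)
    (m₁ : Measurable f₁) (m₂ : Measurable f₂) (m₃ : Measurable f₃) (m₄ : Measurable f₄)
    (m₅ : Measurable f₅) (m₆ : Measurable f₆) (m₇ : Measurable f₇) :
    ∫ ω, f₁ (h ω) * (f₂ (u ω) * (f₃ (v ω) * (f₄ (Φ₀ ω) * (f₅ (Φ₁ ω) * (f₆ (n₀ ω) * f₇ (n₁ ω)))))) ∂μ
      = (∫ ω, f₁ (h ω) ∂μ) * ((∫ ω, f₂ (u ω) ∂μ) * ((∫ ω, f₃ (v ω) ∂μ) *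
        ((∫ ω, f₄ (Φ₀ ω) ∂μ) * ((∫ ω, f₅ (Φ₁ ω) ∂μ) * ((∫ ω, f₆ (n₀ ω) ∂μ) * (∫ ω, f₇ (n₁ ω) ∂μ)))))) := by
  haveI i1 := Measure.isProbabilityMeasure_map (μ := μ) hhm.aemeasurable
  haveI i2 := Measure.isProbabilityMeasure_map (μ := μ) hum.aemeasurable
  haveI i3 := Measure.isProbabilityMeasure_map (μ := μ) hvm.aemeasurable
  haveI i4 := Measure.isProbabilityMeasure_map (μ := μ) hΦ₀m.aemeasurable
  haveI i5 := Measure.isProbabilityMeasure_map (μ := μ) hΦ₁m.aemeasurable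
  haveI i6 := Measure.isProbabilityMeasure_map (μ := μ) hn₀m.aemeasurable
  haveI i7 := Measure.isProbabilityMeasure_map (μ := μ) hn₁m.aemeasurable
  have hT : Measurable (fun ω => (h ω, u ω, v ω, Φ₀ ω, Φ₁ ω, n₀ ω, n₁ ω)) :=
    hhm.prodMk (hum.prodMk (hvm.prodMk (hΦ₀m.prodMk (hΦ₁m.prodMk (hn₀m.prodMk hn₁m)))))
  have hF : Measurable (fun x : ℂ × (Fin N → ℂ) × (Fin N → ℂ) × Matrix (Fin N) (Fin N) ℂ ×
      Matrix (Fin N) (Fin N) ℂ × ℂ × ℂ =>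
      f₁ x.1 * (f₂ x.2.1 * (f₃ x.2.2.1 * (f₄ x.2.2.2.1 * (f₅ x.2.2.2.2.1 *
        (f₆ x.2.2.2.2.2.1 * f₇ x.2.2.2.2.2.2)))))) := by
    apply Measurable.mul (m₁.comp measurable_fst)
    apply Measurable.mul (m₂.comp (measurable_fst.comp measurable_snd))
    apply Measurable.mul (m₃.comp (measurable_fst.comp (measurable_snd.comp measurable_snd)))
    apply Measurable.mul (m₄.comp (measurable_fst.comp (measurable_snd.comp (measurable_snd.comp measurable_snd))))
    apply Measurable.mul (m₅.comp (measurable_fst.comp (measurable_snd.comp (measurable_snd.comp (measurable_snd.comp measurable_snd)))))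
    apply Measurable.mul (m₆.comp (measurable_fst.comp (measurable_snd.comp (measurable_snd.comp (measurable_snd.comp (measurable_snd.comp measurable_snd))))))
    exact m₇.comp (measurable_snd.comp (measurable_snd.comp (measurable_snd.comp (measurable_snd.comp (measurable_snd.comp measurable_snd)))))
  have hmap := integral_map (μ := μ) (φ := fun ω => (h ω, u ω, v ω, Φ₀ ω, Φ₁ ω, n₀ ω, n₁ ω))
    hT.aemeasurable hF.aestronglyMeasurable
  simp only at hmap
  rw [← hmap, hindep, integral_prod7]
  rw [integral_map hhm.aemeasurable m₁.aestronglyMeasurable,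
    integral_map hum.aemeasurable m₂.aestronglyMeasurable,
    integral_map hvm.aemeasurable m₃.aestronglyMeasurable,
    integral_map hΦ₀m.aemeasurable m₄.aestronglyMeasurable,
    integral_map hΦ₁m.aemeasurable m₅.aestronglyMeasurable,
    integral_map hn₀m.aemeasurable m₆.aestronglyMeasurable,
    integral_map hn₁m.aemeasurable m₇.aestronglyMeasurable]

set_option maxHeartbeats 1000000 in
private lemma key_integrable
    (hhm : Measurable h) (hum : Measurable u) (hvm : Measurable v)
    (hΦ₀m : Measurable Φ₀) (hΦ₁m : Measurable Φ₁) (hn₀m : Measurable n₀) (hn₁m : Measurable n₁)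
    (hindep : μ.map (fun ω => (h ω, u ω, v ω, Φ₀ ω, Φ₁ ω, n₀ ω, n₁ ω)) =
      (μ.map h).prod ((μ.map u).prod ((μ.map v).prod ((μ.map Φ₀).prod
        ((μ.map Φ₁).prod ((μ.map n₀).prod (μ.map n₁)))))))
    (f₁ : ℂ → ℂ) (f₂ f₃ : (Fin N → ℂ) → ℂ) (f₄ f₅ : Matrix (Fin N) (Fin N) ℂ → ℂ)
    (f₆ f₇ : ℂ → ℂ)
    (m₁ : Measurable f₁) (m₂ : Measurable f₂) (m₃ : Measurable f₃) (m₄ : Measurable f₄)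
    (m₅ : Measurable f₅) (m₆ : Measurable f₆) (m₇ : Measurable f₇)
    (j₁ : Integrable (fun ω => f₁ (h ω)) μ) (j₂ : Integrable (fun ω => f₂ (u ω)) μ)
    (j₃ : Integrable (fun ω => f₃ (v ω)) μ) (j₄ : Integrable (fun ω => f₄ (Φ₀ ω)) μ)
    (j₅ : Integrable (fun ω => f₅ (Φ₁ ω)) μ) (j₆ : Integrable (fun ω => f₆ (n₀ ω)) μ)
    (j₇ : Integrable (fun ω => f₇ (n₁ ω)) μ) :
    Integrable (fun ω => f₁ (h ω) * (f₂ (u ω) * (f₃ (v ω) * (f₄ (Φ₀ ω) *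
      (f₅ (Φ₁ ω) * (f₆ (n₀ ω) * f₇ (n₁ ω))))))) μ := by
  haveI := Measure.isProbabilityMeasure_map (μ := μ) hhm.aemeasurable
  haveI := Measure.isProbabilityMeasure_map (μ := μ) hum.aemeasurable
  haveI := Measure.isProbabilityMeasure_map (μ := μ) hvm.aemeasurable
  haveI := Measure.isProbabilityMeasure_map (μ := μ) hΦ₀m.aemeasurable
  haveI := Measure.isProbabilityMeasure_map (μ := μ) hΦ₁m.aemeasurable
  haveI := Measure.isProbabilityMeasure_map (μ := μ) hn₀m.aemeasurable
  haveI := Measure.isProbabilityMeasure_map (μ := μ) hn₁m.aemeasurable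
  have hT : Measurable (fun ω => (h ω, u ω, v ω, Φ₀ ω, Φ₁ ω, n₀ ω, n₁ ω)) :=
    hhm.prodMk (hum.prodMk (hvm.prodMk (hΦ₀m.prodMk (hΦ₁m.prodMk (hn₀m.prodMk hn₁m)))))
  have hF : Measurable (fun x : ℂ × (Fin N → ℂ) × (Fin N → ℂ) × Matrix (Fin N) (Fin N) ℂ ×
      Matrix (Fin N) (Fin N) ℂ × ℂ × ℂ =>
      f₁ x.1 * (f₂ x.2.1 * (f₃ x.2.2.1 * (f₄ x.2.2.2.1 * (f₅ x.2.2.2.2.1 *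
        (f₆ x.2.2.2.2.2.1 * f₇ x.2.2.2.2.2.2)))))) := by
    apply Measurable.mul (m₁.comp measurable_fst)
    apply Measurable.mul (m₂.comp (measurable_fst.comp measurable_snd))
    apply Measurable.mul (m₃.comp (measurable_fst.comp (measurable_snd.comp measurable_snd)))
    apply Measurable.mul (m₄.comp (measurable_fst.comp (measurable_snd.comp (measurable_snd.comp measurable_snd))))
    apply Measurable.mul (m₅.comp (measurable_fst.comp (measurable_snd.comp (measurable_snd.comp (measurable_snd.comp measurable_snd)))))
    apply Measurable.mul (m₆.comp (measurable_fst.comp (measurable_snd.comp (measurable_snd.comp (measurable_snd.comp (measurable_snd.comp measurable_snd))))))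
    exact m₇.comp (measurable_snd.comp (measurable_snd.comp (measurable_snd.comp (measurable_snd.comp (measurable_snd.comp measurable_snd)))))
  have k₁ : Integrable f₁ (μ.map h) :=
    (integrable_map_measure m₁.aestronglyMeasurable hhm.aemeasurable).mpr j₁
  have k₂ : Integrable f₂ (μ.map u) :=
    (integrable_map_measure m₂.aestronglyMeasurable hum.aemeasurable).mpr j₂
  have k₃ : Integrable f₃ (μ.map v) :=
    (integrable_map_measure m₃.aestronglyMeasurable hvm.aemeasurable).mpr j₃
  have k₄ : Integrable f₄ (μ.map Φ₀) :=
    (integrable_map_measure m₄.aestronglyMeasurable hΦ₀m.aemeasurable).mpr j₄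
  have k₅ : Integrable f₅ (μ.map Φ₁) :=
    (integrable_map_measure m₅.aestronglyMeasurable hΦ₁m.aemeasurable).mpr j₅
  have k₆ : Integrable f₆ (μ.map n₀) :=
    (integrable_map_measure m₆.aestronglyMeasurable hn₀m.aemeasurable).mpr j₆
  have k₇ : Integrable f₇ (μ.map n₁) :=
    (integrable_map_measure m₇.aestronglyMeasurable hn₁m.aemeasurable).mpr j₇
  have hI : Integrable _ _ := integrable_prod7 (μ.map h) (μ.map u) (μ.map v) (μ.map Φ₀)
    (μ.map Φ₁) (μ.map n₀) (μ.map n₁) f₁ f₂ f₃ f₄ f₅ f₆ f₇ k₁ k₂ k₃ k₄ k₅ k₆ k₇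
  rw [← hindep] at hI
  exact (integrable_map_measure hF.aestronglyMeasurable hT.aemeasurable).mp hI

end Key

private lemma trace_formula {N : ℕ} (A B P Q : Matrix (Fin N) (Fin N) ℂ) :
    (A * Qᴴ * B * P).trace
      = ∑ i, ∑ j, ∑ k, ∑ m, A j m * (B k i * (P i j * star (Q k m))) := by
  simp only [Matrix.trace, Matrix.diag, Matrix.mul_apply, Matrix.conjTranspose_apply,
    Finset.sum_mul, Finset.mul_sum]
  rw [Finset.sum_comm]
  refine Finset.sum_congr rfl fun i _ => ?_
  refine Finset.sum_congr rfl fun j _ => ?_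
  refine Finset.sum_congr rfl fun k _ => ?_
  refine Finset.sum_congr rfl fun m _ => ?_
  ring


set_option maxHeartbeats 4000000 in
/-- **Theorem 1** (cross-correlation and variance of IRS-assisted channel samples,
direct path present).  The channel samples are
`s p ω = h ω + (v ω)ᴴ ⬝ (Φ p ω) ⬝ (u ω) + n p ω`. -/
theorem crossCorrelation_variance_IRS_samples
    {Ω : Type*} [MeasurableSpace Ω] (μ : Measure Ω) [IsProbabilityMeasure μ]
    {N : ℕ} (hN : 1 ≤ N)
    (h : Ω → ℂ) (u v : Ω → Fin N → ℂ)
    (Φ : Fin 2 → Ω → Matrix (Fin N) (Fin N) ℂ)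
    (n : Fin 2 → Ω → ℂ)
    (s : Fin 2 → Ω → ℂ)
    (hs : ∀ p ω, s p ω = h ω + star (v ω) ⬝ᵥ ((Φ p ω).mulVec (u ω)) + n p ω)
    -- measurability
    (hhm : Measurable h) (hum : Measurable u) (hvm : Measurable v)
    (hΦm : ∀ p, Measurable (Φ p)) (hnm : ∀ p, Measurable (n p))
    -- each `Φ p ω` is diagonal with unit-modulus diagonal entries
    (hΦdiag : ∀ p ω, ∀ i j : Fin N, i ≠ j → Φ p ω i j = 0)
    (hΦunit : ∀ p ω, ∀ i : Fin N, ‖Φ p ω i i‖ = 1)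
    -- square integrability
    (hhL2 : MemLp h 2 μ) (hnL2 : ∀ p, MemLp (n p) 2 μ)
    (huL2 : ∀ i, MemLp (fun ω => u ω i) 2 μ)
    (hvL2 : ∀ i, MemLp (fun ω => v ω i) 2 μ)
    -- zero means
    (hhmean : ∫ ω, h ω ∂μ = 0)
    (hnmean : ∀ p, ∫ ω, n p ω ∂μ = 0)
    (humean : ∀ i, ∫ ω, u ω i ∂μ = 0)
    (hvmean : ∀ i, ∫ ω, v ω i ∂μ = 0)
    -- second moments of the direct channel and of the noises
    (β σ2 : ℝ)
    (hβ : ∫ ω, h ω * star (h ω) ∂μ = (β : ℂ))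
    (hσ : ∀ p, ∫ ω, n p ω * star (n p ω) ∂μ = (σ2 : ℂ))
    (hnuncorr : ∫ ω, n 0 ω * star (n 1 ω) ∂μ = 0)
    -- covariance matrices of the IRS channel vectors
    (Ru Rv : Matrix (Fin N) (Fin N) ℂ)
    (hRu : ∀ i j, Ru i j = ∫ ω, u ω i * star (u ω j) ∂μ)
    (hRv : ∀ i j, Rv i j = ∫ ω, v ω i * star (v ω j) ∂μ)
    -- entrywise expectations of the phase-shift matrices
    (EΦ : Fin 2 → Matrix (Fin N) (Fin N) ℂ)
    (hEΦ : ∀ p i j, EΦ p i j = ∫ ω, Φ p ω i j ∂μ)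
    -- mutual independence of the family (h, u, v, Φ₁, Φ₂, n₁, n₂):
    -- the joint law is the product of the individual laws
    (hindep :
      μ.map (fun ω => (h ω, u ω, v ω, Φ 0 ω, Φ 1 ω, n 0 ω, n 1 ω)) =
        (μ.map h).prod ((μ.map u).prod ((μ.map v).prod ((μ.map (Φ 0)).prod
          ((μ.map (Φ 1)).prod ((μ.map (n 0)).prod (μ.map (n 1)))))))) :
    -- (i) cross-correlation
    (∫ ω, s 0 ω * star (s 1 ω) ∂μ
        = (β : ℂ) + (Ru * (EΦ 1)ᴴ * Rv * EΦ 0).trace) ∧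
    -- (ii) variance of each sample
    (∀ l : Fin 2, ∫ ω, s l ω * star (s l ω) ∂μ
        = (β : ℂ) + (∫ ω, (Ru * (Φ l ω)ᴴ * Rv * Φ l ω).trace ∂μ) + (σ2 : ℂ)) ∧
    -- consequence: the correlation coefficient
    (∀ l : Fin 2,
      (∫ ω, s 0 ω * star (s 1 ω) ∂μ) / (∫ ω, s l ω * star (s l ω) ∂μ)
        = ((β : ℂ) + (Ru * (EΦ 1)ᴴ * Rv * EΦ 0).trace)
          / ((β : ℂ) + (∫ ω, (Ru * (Φ l ω)ᴴ * Rv * Φ l ω).trace ∂μ) + (σ2 : ℂ))) := by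
  -- basic measurability
  have f2cases : ∀ r : Fin 2, r = 0 ∨ r = 1 := by decide
  have mst : Measurable (fun z : ℂ => star z) := continuous_star.measurable
  have mE : ∀ (i j : Fin N), Measurable (fun M : Matrix (Fin N) (Fin N) ℂ => M i j) :=
    fun i j => (measurable_pi_apply j).comp (measurable_pi_apply i)
  have mEs : ∀ (i j : Fin N), Measurable (fun M : Matrix (Fin N) (Fin N) ℂ => star (M i j)) :=
    fun i j => mst.comp (mE i j)
  have mEE : ∀ (i j k m : Fin N),
      Measurable (fun M : Matrix (Fin N) (Fin N) ℂ => M i j * star (M k m)) :=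
    fun i j k m => (mE i j).mul (mEs k m)
  -- boundedness of the phase-shift entries
  have hΦnorm : ∀ (p : Fin 2) ω (i j : Fin N), ‖Φ p ω i j‖ ≤ 1 := by
    intro p ω i j
    by_cases hij : i = j
    · subst hij; rw [hΦunit p ω i]
    · rw [hΦdiag p ω i j hij]; simp
  -- integrability of the basic factors
  have ih : Integrable h μ := hhL2.integrable one_le_two
  have ihs : Integrable (fun ω => star (h ω)) μ := integrable_star' ih
  have ihh : Integrable (fun ω => h ω * star (h ω)) μ := integrable_mul_L2' hhL2 (memLp_star' hhL2)
  have iu : ∀ j, Integrable (fun ω => u ω j) μ := fun j => (huL2 j).integrable one_le_two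
  have ius : ∀ j, Integrable (fun ω => star (u ω j)) μ := fun j => integrable_star' (iu j)
  have iuu : ∀ j m, Integrable (fun ω => u ω j * star (u ω m)) μ :=
    fun j m => integrable_mul_L2' (huL2 j) (memLp_star' (huL2 m))
  have iv : ∀ i, Integrable (fun ω => v ω i) μ := fun i => (hvL2 i).integrable one_le_two
  have ivs : ∀ i, Integrable (fun ω => star (v ω i)) μ := fun i => integrable_star' (iv i)
  have ivv : ∀ i k, Integrable (fun ω => star (v ω i) * v ω k) μ :=
    fun i k => integrable_mul_L2' (memLp_star' (hvL2 i)) (hvL2 k)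
  have inl : ∀ p, Integrable (n p) μ := fun p => (hnL2 p).integrable one_le_two
  have inls : ∀ p, Integrable (fun ω => star (n p ω)) μ := fun p => integrable_star' (inl p)
  have inn : ∀ p q, Integrable (fun ω => n p ω * star (n q ω)) μ :=
    fun p q => integrable_mul_L2' (hnL2 p) (memLp_star' (hnL2 q))
  have iΦ : ∀ (p : Fin 2) (i j : Fin N), Integrable (fun ω => Φ p ω i j) μ := by
    intro p i j
    refine integrable_of_bound' ?_ 1 (fun ω => hΦnorm p ω i j)
    exact (mE i j).comp (hΦm p)
  have iΦs : ∀ (p : Fin 2) (i j : Fin N), Integrable (fun ω => star (Φ p ω i j)) μ :=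
    fun p i j => integrable_star' (iΦ p i j)
  have iΦΦ : ∀ (p q : Fin 2) (i j k m : Fin N),
      Integrable (fun ω => Φ p ω i j * star (Φ q ω k m)) μ := by
    intro p q i j k m
    refine integrable_of_bound' ?_ 1 ?_
    · exact ((mE i j).comp (hΦm p)).mul (mst.comp ((mE k m).comp (hΦm q)))
    · intro ω
      rw [norm_mul, norm_star]
      have h1 := hΦnorm p ω i j
      have h2 := hΦnorm q ω k m
      have h3 : (0:ℝ) ≤ ‖Φ p ω i j‖ := norm_nonneg _
      have h4 : (0:ℝ) ≤ ‖Φ q ω k m‖ := norm_nonneg _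
      nlinarith
  -- basic integral values
  have Vhs : ∫ ω, star (h ω) ∂μ = 0 := by
    rw [show (fun ω => star (h ω)) = (fun ω => (starRingEnd ℂ) (h ω)) from rfl,
      integral_conj, hhmean, map_zero]
  have Vus : ∀ j, ∫ ω, star (u ω j) ∂μ = 0 := by
    intro j
    rw [show (fun ω => star (u ω j)) = (fun ω => (starRingEnd ℂ) (u ω j)) from rfl,
      integral_conj, humean j, map_zero]
  have Vvs : ∀ i, ∫ ω, star (v ω i) ∂μ = 0 := by
    intro i
    rw [show (fun ω => star (v ω i)) = (fun ω => (starRingEnd ℂ) (v ω i)) from rfl,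
      integral_conj, hvmean i, map_zero]
  have Vns : ∀ p, ∫ ω, star (n p ω) ∂μ = 0 := by
    intro p
    rw [show (fun ω => star (n p ω)) = (fun ω => (starRingEnd ℂ) (n p ω)) from rfl,
      integral_conj, hnmean p, map_zero]
  have Vuu : ∀ j m, ∫ ω, u ω j * star (u ω m) ∂μ = Ru j m := fun j m => (hRu j m).symm
  have Vvv : ∀ i k, ∫ ω, star (v ω i) * v ω k ∂μ = star (Rv i k) := by
    intro i k
    rw [show (fun ω => star (v ω i) * v ω k)
        = (fun ω => (starRingEnd ℂ) (v ω i * star (v ω k))) from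
      funext fun ω => by rw [starRingEnd_apply, star_mul', star_star]]
    rw [integral_conj, ← hRv i k, starRingEnd_apply]
  have hRvh : ∀ i k, star (Rv i k) = Rv k i := by
    intro i k
    rw [← Vvv i k, hRv k i]
    rw [show (fun ω => star (v ω i) * v ω k) = (fun ω => v ω k * star (v ω i)) from
      funext fun ω => mul_comm _ _]
  have VΦ : ∀ (p : Fin 2) (i j : Fin N), ∫ ω, Φ p ω i j ∂μ = EΦ p i j :=
    fun p i j => (hEΦ p i j).symm
  have VΦs : ∀ (p : Fin 2) (i j : Fin N), ∫ ω, star (Φ p ω i j) ∂μ = star (EΦ p i j) := by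
    intro p i j
    rw [show (fun ω => star (Φ p ω i j)) = (fun ω => (starRingEnd ℂ) (Φ p ω i j)) from rfl,
      integral_conj, ← hEΦ p i j, starRingEnd_apply]
  -- the two master tools
  have K := key_factorization μ h u v (Φ 0) (Φ 1) (n 0) (n 1) hhm hum hvm (hΦm 0) (hΦm 1)
    (hnm 0) (hnm 1) hindep
  have KI := key_integrable μ h u v (Φ 0) (Φ 1) (n 0) (n 1) hhm hum hvm (hΦm 0) (hΦm 1)
    (hnm 0) (hnm 1) hindep

  have EP01 : ∀ (i j k m : Fin N), ∫ ω, Φ 0 ω i j * star (Φ 1 ω k m) ∂μ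
      = (∫ ω, Φ 0 ω i j ∂μ) * ∫ ω, star (Φ 1 ω k m) ∂μ := by
    intro i j k m
    rw [show (fun ω => Φ 0 ω i j * star (Φ 1 ω k m)) = (fun ω => 1 * (1 * (1 * ((Φ 0 ω) i j * (star ((Φ 1 ω) k m) * (1 * (1))))))) from funext fun ω => by ring]
    have t := K (fun _ : ℂ => (1:ℂ)) (fun _ : Fin N → ℂ => (1:ℂ)) (fun _ : Fin N → ℂ => (1:ℂ)) (fun M : Matrix (Fin N) (Fin N) ℂ => M i j) (fun M : Matrix (Fin N) (Fin N) ℂ => star (M k m)) (fun _ : ℂ => (1:ℂ)) (fun _ : ℂ => (1:ℂ)) measurable_const measurable_const measurable_const (mE i j) (mEs k m) measurable_const measurable_const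
    rw [t]
    simp [integral_const, measure_univ, probReal_univ]

  have EP10 : ∀ (i j k m : Fin N), ∫ ω, Φ 1 ω i j * star (Φ 0 ω k m) ∂μ
      = (∫ ω, star (Φ 0 ω k m) ∂μ) * ∫ ω, Φ 1 ω i j ∂μ := by
    intro i j k m
    rw [show (fun ω => Φ 1 ω i j * star (Φ 0 ω k m)) = (fun ω => 1 * (1 * (1 * (star ((Φ 0 ω) k m) * ((Φ 1 ω) i j * (1 * (1))))))) from funext fun ω => by ring]
    have t := K (fun _ : ℂ => (1:ℂ)) (fun _ : Fin N → ℂ => (1:ℂ)) (fun _ : Fin N → ℂ => (1:ℂ)) (fun M : Matrix (Fin N) (Fin N) ℂ => star (M k m)) (fun M : Matrix (Fin N) (Fin N) ℂ => M i j) (fun _ : ℂ => (1:ℂ)) (fun _ : ℂ => (1:ℂ)) measurable_const measurable_const measurable_const (mEs k m) (mE i j) measurable_const measurable_const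
    rw [t]
    simp [integral_const, measure_univ, probReal_univ]

  have E2 : ∀ (q : Fin 2) (i j : Fin N), ∫ ω, h ω * (v ω i * (star (Φ q ω i j) * star (u ω j))) ∂μ = 0 := by
    intro q i j
    rcases f2cases q with rfl | rfl
    · rw [show (fun ω => h ω * (v ω i * (star (Φ 0 ω i j) * star (u ω j)))) = (fun ω => (h ω) * (star ((u ω) j) * ((v ω) i * (star ((Φ 0 ω) i j) * (1 * (1 * (1))))))) from funext fun ω => by ring]
      have t := K (fun z : ℂ => z) (fun w : Fin N → ℂ => star (w j)) (fun w : Fin N → ℂ => w i) (fun M : Matrix (Fin N) (Fin N) ℂ => star (M i j)) (fun _ : Matrix (Fin N) (Fin N) ℂ => (1:ℂ)) (fun _ : ℂ => (1:ℂ)) (fun _ : ℂ => (1:ℂ)) measurable_id (mst.comp (measurable_pi_apply j)) (measurable_pi_apply i) (mEs i j) measurable_const measurable_const measurable_const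
      rw [t]
      simp only [integral_const, measure_univ, ENNReal.toReal_one, probReal_univ, one_smul, hhmean, humean, hvmean, hnmean, Vhs, Vus, Vvs, Vns, Vuu, Vvv]
      ring
    · rw [show (fun ω => h ω * (v ω i * (star (Φ 1 ω i j) * star (u ω j)))) = (fun ω => (h ω) * (star ((u ω) j) * ((v ω) i * (1 * (star ((Φ 1 ω) i j) * (1 * (1))))))) from funext fun ω => by ring]
      have t := K (fun z : ℂ => z) (fun w : Fin N → ℂ => star (w j)) (fun w : Fin N → ℂ => w i) (fun _ : Matrix (Fin N) (Fin N) ℂ => (1:ℂ)) (fun M : Matrix (Fin N) (Fin N) ℂ => star (M i j)) (fun _ : ℂ => (1:ℂ)) (fun _ : ℂ => (1:ℂ)) measurable_id (mst.comp (measurable_pi_apply j)) (measurable_pi_apply i) measurable_const (mEs i j) measurable_const measurable_const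
      rw [t]
      simp only [integral_const, measure_univ, ENNReal.toReal_one, probReal_univ, one_smul, hhmean, humean, hvmean, hnmean, Vhs, Vus, Vvs, Vns, Vuu, Vvv]
      ring

  have E3 : ∀ (q : Fin 2), ∫ ω, h ω * star (n q ω) ∂μ = 0 := by
    intro q
    rcases f2cases q with rfl | rfl
    · rw [show (fun ω => h ω * star (n 0 ω)) = (fun ω => (h ω) * (1 * (1 * (1 * (1 * (star (n 0 ω) * (1))))))) from funext fun ω => by ring]
      have t := K (fun z : ℂ => z) (fun _ : Fin N → ℂ => (1:ℂ)) (fun _ : Fin N → ℂ => (1:ℂ)) (fun _ : Matrix (Fin N) (Fin N) ℂ => (1:ℂ)) (fun _ : Matrix (Fin N) (Fin N) ℂ => (1:ℂ)) (fun z : ℂ => star z) (fun _ : ℂ => (1:ℂ)) measurable_id measurable_const measurable_const measurable_const measurable_const mst measurable_const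
      rw [t]
      simp only [integral_const, measure_univ, ENNReal.toReal_one, probReal_univ, one_smul, hhmean, humean, hvmean, hnmean, Vhs, Vus, Vvs, Vns, Vuu, Vvv]
      ring
    · rw [show (fun ω => h ω * star (n 1 ω)) = (fun ω => (h ω) * (1 * (1 * (1 * (1 * (1 * (star (n 1 ω)))))))) from funext fun ω => by ring]
      have t := K (fun z : ℂ => z) (fun _ : Fin N → ℂ => (1:ℂ)) (fun _ : Fin N → ℂ => (1:ℂ)) (fun _ : Matrix (Fin N) (Fin N) ℂ => (1:ℂ)) (fun _ : Matrix (Fin N) (Fin N) ℂ => (1:ℂ)) (fun _ : ℂ => (1:ℂ)) (fun z : ℂ => star z) measurable_id measurable_const measurable_const measurable_const measurable_const measurable_const mst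
      rw [t]
      simp only [integral_const, measure_univ, ENNReal.toReal_one, probReal_univ, one_smul, hhmean, humean, hvmean, hnmean, Vhs, Vus, Vvs, Vns, Vuu, Vvv]
      ring

  have E4 : ∀ (p : Fin 2) (i j : Fin N), ∫ ω, (star (v ω i) * (Φ p ω i j * u ω j)) * star (h ω) ∂μ = 0 := by
    intro p i j
    rcases f2cases p with rfl | rfl
    · rw [show (fun ω => (star (v ω i) * (Φ 0 ω i j * u ω j)) * star (h ω)) = (fun ω => star (h ω) * ((u ω) j * (star ((v ω) i) * ((Φ 0 ω) i j * (1 * (1 * (1))))))) from funext fun ω => by ring]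
      have t := K (fun z : ℂ => star z) (fun w : Fin N → ℂ => w j) (fun w : Fin N → ℂ => star (w i)) (fun M : Matrix (Fin N) (Fin N) ℂ => M i j) (fun _ : Matrix (Fin N) (Fin N) ℂ => (1:ℂ)) (fun _ : ℂ => (1:ℂ)) (fun _ : ℂ => (1:ℂ)) mst (measurable_pi_apply j) (mst.comp (measurable_pi_apply i)) (mE i j) measurable_const measurable_const measurable_const
      rw [t]
      simp only [integral_const, measure_univ, ENNReal.toReal_one, probReal_univ, one_smul, hhmean, humean, hvmean, hnmean, Vhs, Vus, Vvs, Vns, Vuu, Vvv]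
      ring
    · rw [show (fun ω => (star (v ω i) * (Φ 1 ω i j * u ω j)) * star (h ω)) = (fun ω => star (h ω) * ((u ω) j * (star ((v ω) i) * (1 * ((Φ 1 ω) i j * (1 * (1))))))) from funext fun ω => by ring]
      have t := K (fun z : ℂ => star z) (fun w : Fin N → ℂ => w j) (fun w : Fin N → ℂ => star (w i)) (fun _ : Matrix (Fin N) (Fin N) ℂ => (1:ℂ)) (fun M : Matrix (Fin N) (Fin N) ℂ => M i j) (fun _ : ℂ => (1:ℂ)) (fun _ : ℂ => (1:ℂ)) mst (measurable_pi_apply j) (mst.comp (measurable_pi_apply i)) measurable_const (mE i j) measurable_const measurable_const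
      rw [t]
      simp only [integral_const, measure_univ, ENNReal.toReal_one, probReal_univ, one_smul, hhmean, humean, hvmean, hnmean, Vhs, Vus, Vvs, Vns, Vuu, Vvv]
      ring

  have E6 : ∀ (p q : Fin 2) (i j : Fin N), ∫ ω, (star (v ω i) * (Φ p ω i j * u ω j)) * star (n q ω) ∂μ = 0 := by
    intro p q i j
    rcases f2cases p with rfl | rfl <;> rcases f2cases q with rfl | rfl
    · rw [show (fun ω => (star (v ω i) * (Φ 0 ω i j * u ω j)) * star (n 0 ω)) = (fun ω => 1 * ((u ω) j * (star ((v ω) i) * ((Φ 0 ω) i j * (1 * (star (n 0 ω) * (1))))))) from funext fun ω => by ring]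
      have t := K (fun _ : ℂ => (1:ℂ)) (fun w : Fin N → ℂ => w j) (fun w : Fin N → ℂ => star (w i)) (fun M : Matrix (Fin N) (Fin N) ℂ => M i j) (fun _ : Matrix (Fin N) (Fin N) ℂ => (1:ℂ)) (fun z : ℂ => star z) (fun _ : ℂ => (1:ℂ)) measurable_const (measurable_pi_apply j) (mst.comp (measurable_pi_apply i)) (mE i j) measurable_const mst measurable_const
      rw [t]
      simp only [integral_const, measure_univ, ENNReal.toReal_one, probReal_univ, one_smul, hhmean, humean, hvmean, hnmean, Vhs, Vus, Vvs, Vns, Vuu, Vvv]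
      ring
    · rw [show (fun ω => (star (v ω i) * (Φ 0 ω i j * u ω j)) * star (n 1 ω)) = (fun ω => 1 * ((u ω) j * (star ((v ω) i) * ((Φ 0 ω) i j * (1 * (1 * (star (n 1 ω)))))))) from funext fun ω => by ring]
      have t := K (fun _ : ℂ => (1:ℂ)) (fun w : Fin N → ℂ => w j) (fun w : Fin N → ℂ => star (w i)) (fun M : Matrix (Fin N) (Fin N) ℂ => M i j) (fun _ : Matrix (Fin N) (Fin N) ℂ => (1:ℂ)) (fun _ : ℂ => (1:ℂ)) (fun z : ℂ => star z) measurable_const (measurable_pi_apply j) (mst.comp (measurable_pi_apply i)) (mE i j) measurable_const measurable_const mst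
      rw [t]
      simp only [integral_const, measure_univ, ENNReal.toReal_one, probReal_univ, one_smul, hhmean, humean, hvmean, hnmean, Vhs, Vus, Vvs, Vns, Vuu, Vvv]
      ring
    · rw [show (fun ω => (star (v ω i) * (Φ 1 ω i j * u ω j)) * star (n 0 ω)) = (fun ω => 1 * ((u ω) j * (star ((v ω) i) * (1 * ((Φ 1 ω) i j * (star (n 0 ω) * (1))))))) from funext fun ω => by ring]
      have t := K (fun _ : ℂ => (1:ℂ)) (fun w : Fin N → ℂ => w j) (fun w : Fin N → ℂ => star (w i)) (fun _ : Matrix (Fin N) (Fin N) ℂ => (1:ℂ)) (fun M : Matrix (Fin N) (Fin N) ℂ => M i j) (fun z : ℂ => star z) (fun _ : ℂ => (1:ℂ)) measurable_const (measurable_pi_apply j) (mst.comp (measurable_pi_apply i)) measurable_const (mE i j) mst measurable_const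
      rw [t]
      simp only [integral_const, measure_univ, ENNReal.toReal_one, probReal_univ, one_smul, hhmean, humean, hvmean, hnmean, Vhs, Vus, Vvs, Vns, Vuu, Vvv]
      ring
    · rw [show (fun ω => (star (v ω i) * (Φ 1 ω i j * u ω j)) * star (n 1 ω)) = (fun ω => 1 * ((u ω) j * (star ((v ω) i) * (1 * ((Φ 1 ω) i j * (1 * (star (n 1 ω)))))))) from funext fun ω => by ring]
      have t := K (fun _ : ℂ => (1:ℂ)) (fun w : Fin N → ℂ => w j) (fun w : Fin N → ℂ => star (w i)) (fun _ : Matrix (Fin N) (Fin N) ℂ => (1:ℂ)) (fun M : Matrix (Fin N) (Fin N) ℂ => M i j) (fun _ : ℂ => (1:ℂ)) (fun z : ℂ => star z) measurable_const (measurable_pi_apply j) (mst.comp (measurable_pi_apply i)) measurable_const (mE i j) measurable_const mst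
      rw [t]
      simp only [integral_const, measure_univ, ENNReal.toReal_one, probReal_univ, one_smul, hhmean, humean, hvmean, hnmean, Vhs, Vus, Vvs, Vns, Vuu, Vvv]
      ring

  have E7 : ∀ (p : Fin 2), ∫ ω, n p ω * star (h ω) ∂μ = 0 := by
    intro p
    rcases f2cases p with rfl | rfl
    · rw [show (fun ω => n 0 ω * star (h ω)) = (fun ω => star (h ω) * (1 * (1 * (1 * (1 * ((n 0 ω) * (1))))))) from funext fun ω => by ring]
      have t := K (fun z : ℂ => star z) (fun _ : Fin N → ℂ => (1:ℂ)) (fun _ : Fin N → ℂ => (1:ℂ)) (fun _ : Matrix (Fin N) (Fin N) ℂ => (1:ℂ)) (fun _ : Matrix (Fin N) (Fin N) ℂ => (1:ℂ)) (fun z : ℂ => z) (fun _ : ℂ => (1:ℂ)) mst measurable_const measurable_const measurable_const measurable_const measurable_id measurable_const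
      rw [t]
      simp only [integral_const, measure_univ, ENNReal.toReal_one, probReal_univ, one_smul, hhmean, humean, hvmean, hnmean, Vhs, Vus, Vvs, Vns, Vuu, Vvv]
      ring
    · rw [show (fun ω => n 1 ω * star (h ω)) = (fun ω => star (h ω) * (1 * (1 * (1 * (1 * (1 * ((n 1 ω)))))))) from funext fun ω => by ring]
      have t := K (fun z : ℂ => star z) (fun _ : Fin N → ℂ => (1:ℂ)) (fun _ : Fin N → ℂ => (1:ℂ)) (fun _ : Matrix (Fin N) (Fin N) ℂ => (1:ℂ)) (fun _ : Matrix (Fin N) (Fin N) ℂ => (1:ℂ)) (fun _ : ℂ => (1:ℂ)) (fun z : ℂ => z) mst measurable_const measurable_const measurable_const measurable_const measurable_const measurable_id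
      rw [t]
      simp only [integral_const, measure_univ, ENNReal.toReal_one, probReal_univ, one_smul, hhmean, humean, hvmean, hnmean, Vhs, Vus, Vvs, Vns, Vuu, Vvv]
      ring

  have E8 : ∀ (p q : Fin 2) (i j : Fin N), ∫ ω, n p ω * (v ω i * (star (Φ q ω i j) * star (u ω j))) ∂μ = 0 := by
    intro p q i j
    rcases f2cases p with rfl | rfl <;> rcases f2cases q with rfl | rfl
    · rw [show (fun ω => n 0 ω * (v ω i * (star (Φ 0 ω i j) * star (u ω j)))) = (fun ω => 1 * (star ((u ω) j) * ((v ω) i * (star ((Φ 0 ω) i j) * (1 * ((n 0 ω) * (1))))))) from funext fun ω => by ring]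
      have t := K (fun _ : ℂ => (1:ℂ)) (fun w : Fin N → ℂ => star (w j)) (fun w : Fin N → ℂ => w i) (fun M : Matrix (Fin N) (Fin N) ℂ => star (M i j)) (fun _ : Matrix (Fin N) (Fin N) ℂ => (1:ℂ)) (fun z : ℂ => z) (fun _ : ℂ => (1:ℂ)) measurable_const (mst.comp (measurable_pi_apply j)) (measurable_pi_apply i) (mEs i j) measurable_const measurable_id measurable_const
      rw [t]
      simp only [integral_const, measure_univ, ENNReal.toReal_one, probReal_univ, one_smul, hhmean, humean, hvmean, hnmean, Vhs, Vus, Vvs, Vns, Vuu, Vvv]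
      ring
    · rw [show (fun ω => n 0 ω * (v ω i * (star (Φ 1 ω i j) * star (u ω j)))) = (fun ω => 1 * (star ((u ω) j) * ((v ω) i * (1 * (star ((Φ 1 ω) i j) * ((n 0 ω) * (1))))))) from funext fun ω => by ring]
      have t := K (fun _ : ℂ => (1:ℂ)) (fun w : Fin N → ℂ => star (w j)) (fun w : Fin N → ℂ => w i) (fun _ : Matrix (Fin N) (Fin N) ℂ => (1:ℂ)) (fun M : Matrix (Fin N) (Fin N) ℂ => star (M i j)) (fun z : ℂ => z) (fun _ : ℂ => (1:ℂ)) measurable_const (mst.comp (measurable_pi_apply j)) (measurable_pi_apply i) measurable_const (mEs i j) measurable_id measurable_const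
      rw [t]
      simp only [integral_const, measure_univ, ENNReal.toReal_one, probReal_univ, one_smul, hhmean, humean, hvmean, hnmean, Vhs, Vus, Vvs, Vns, Vuu, Vvv]
      ring
    · rw [show (fun ω => n 1 ω * (v ω i * (star (Φ 0 ω i j) * star (u ω j)))) = (fun ω => 1 * (star ((u ω) j) * ((v ω) i * (star ((Φ 0 ω) i j) * (1 * (1 * ((n 1 ω)))))))) from funext fun ω => by ring]
      have t := K (fun _ : ℂ => (1:ℂ)) (fun w : Fin N → ℂ => star (w j)) (fun w : Fin N → ℂ => w i) (fun M : Matrix (Fin N) (Fin N) ℂ => star (M i j)) (fun _ : Matrix (Fin N) (Fin N) ℂ => (1:ℂ)) (fun _ : ℂ => (1:ℂ)) (fun z : ℂ => z) measurable_const (mst.comp (measurable_pi_apply j)) (measurable_pi_apply i) (mEs i j) measurable_const measurable_const measurable_id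
      rw [t]
      simp only [integral_const, measure_univ, ENNReal.toReal_one, probReal_univ, one_smul, hhmean, humean, hvmean, hnmean, Vhs, Vus, Vvs, Vns, Vuu, Vvv]
      ring
    · rw [show (fun ω => n 1 ω * (v ω i * (star (Φ 1 ω i j) * star (u ω j)))) = (fun ω => 1 * (star ((u ω) j) * ((v ω) i * (1 * (star ((Φ 1 ω) i j) * (1 * ((n 1 ω)))))))) from funext fun ω => by ring]
      have t := K (fun _ : ℂ => (1:ℂ)) (fun w : Fin N → ℂ => star (w j)) (fun w : Fin N → ℂ => w i) (fun _ : Matrix (Fin N) (Fin N) ℂ => (1:ℂ)) (fun M : Matrix (Fin N) (Fin N) ℂ => star (M i j)) (fun _ : ℂ => (1:ℂ)) (fun z : ℂ => z) measurable_const (mst.comp (measurable_pi_apply j)) (measurable_pi_apply i) measurable_const (mEs i j) measurable_const measurable_id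
      rw [t]
      simp only [integral_const, measure_univ, ENNReal.toReal_one, probReal_univ, one_smul, hhmean, humean, hvmean, hnmean, Vhs, Vus, Vvs, Vns, Vuu, Vvv]
      ring

  have E5 : ∀ (p q : Fin 2) (i j k m : Fin N),
      ∫ ω, (star (v ω i) * (Φ p ω i j * u ω j)) * (v ω k * (star (Φ q ω k m) * star (u ω m))) ∂μ
        = Ru j m * (star (Rv i k) * ∫ ω, Φ p ω i j * star (Φ q ω k m) ∂μ) := by
    intro p q i j k m
    rcases f2cases p with rfl | rfl <;> rcases f2cases q with rfl | rfl
    · rw [show (fun ω => (star (v ω i) * (Φ 0 ω i j * u ω j)) * (v ω k * (star (Φ 0 ω k m) * star (u ω m)))) = (fun ω => 1 * ((u ω) j * star ((u ω) m) * (star ((v ω) i) * (v ω) k * ((Φ 0 ω) i j * star ((Φ 0 ω) k m) * (1 * (1 * (1))))))) from funext fun ω => by ring]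
      have t := K (fun _ : ℂ => (1:ℂ)) (fun w : Fin N → ℂ => w j * star (w m)) (fun w : Fin N → ℂ => star (w i) * w k) (fun M : Matrix (Fin N) (Fin N) ℂ => M i j * star (M k m)) (fun _ : Matrix (Fin N) (Fin N) ℂ => (1:ℂ)) (fun _ : ℂ => (1:ℂ)) (fun _ : ℂ => (1:ℂ)) measurable_const ((measurable_pi_apply j).mul (mst.comp (measurable_pi_apply m))) ((mst.comp (measurable_pi_apply i)).mul (measurable_pi_apply k)) (mEE i j k m) measurable_const measurable_const measurable_const
      rw [t]
      simp only [integral_const, measure_univ, ENNReal.toReal_one, probReal_univ, one_smul, Vuu, Vvv]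
      ring
    · rw [show (fun ω => (star (v ω i) * (Φ 0 ω i j * u ω j)) * (v ω k * (star (Φ 1 ω k m) * star (u ω m)))) = (fun ω => 1 * ((u ω) j * star ((u ω) m) * (star ((v ω) i) * (v ω) k * ((Φ 0 ω) i j * (star ((Φ 1 ω) k m) * (1 * (1))))))) from funext fun ω => by ring]
      have t := K (fun _ : ℂ => (1:ℂ)) (fun w : Fin N → ℂ => w j * star (w m)) (fun w : Fin N → ℂ => star (w i) * w k) (fun M : Matrix (Fin N) (Fin N) ℂ => M i j) (fun M : Matrix (Fin N) (Fin N) ℂ => star (M k m)) (fun _ : ℂ => (1:ℂ)) (fun _ : ℂ => (1:ℂ)) measurable_const ((measurable_pi_apply j).mul (mst.comp (measurable_pi_apply m))) ((mst.comp (measurable_pi_apply i)).mul (measurable_pi_apply k)) (mE i j) (mEs k m) measurable_const measurable_const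
      rw [t]
      rw [EP01 i j k m]
      simp only [integral_const, measure_univ, ENNReal.toReal_one, probReal_univ, one_smul, Vuu, Vvv]
      ring
    · rw [show (fun ω => (star (v ω i) * (Φ 1 ω i j * u ω j)) * (v ω k * (star (Φ 0 ω k m) * star (u ω m)))) = (fun ω => 1 * ((u ω) j * star ((u ω) m) * (star ((v ω) i) * (v ω) k * (star ((Φ 0 ω) k m) * ((Φ 1 ω) i j * (1 * (1))))))) from funext fun ω => by ring]
      have t := K (fun _ : ℂ => (1:ℂ)) (fun w : Fin N → ℂ => w j * star (w m)) (fun w : Fin N → ℂ => star (w i) * w k) (fun M : Matrix (Fin N) (Fin N) ℂ => star (M k m)) (fun M : Matrix (Fin N) (Fin N) ℂ => M i j) (fun _ : ℂ => (1:ℂ)) (fun _ : ℂ => (1:ℂ)) measurable_const ((measurable_pi_apply j).mul (mst.comp (measurable_pi_apply m))) ((mst.comp (measurable_pi_apply i)).mul (measurable_pi_apply k)) (mEs k m) (mE i j) measurable_const measurable_const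
      rw [t]
      rw [EP10 i j k m]
      simp only [integral_const, measure_univ, ENNReal.toReal_one, probReal_univ, one_smul, Vuu, Vvv]
      ring
    · rw [show (fun ω => (star (v ω i) * (Φ 1 ω i j * u ω j)) * (v ω k * (star (Φ 1 ω k m) * star (u ω m)))) = (fun ω => 1 * ((u ω) j * star ((u ω) m) * (star ((v ω) i) * (v ω) k * (1 * ((Φ 1 ω) i j * star ((Φ 1 ω) k m) * (1 * (1))))))) from funext fun ω => by ring]
      have t := K (fun _ : ℂ => (1:ℂ)) (fun w : Fin N → ℂ => w j * star (w m)) (fun w : Fin N → ℂ => star (w i) * w k) (fun _ : Matrix (Fin N) (Fin N) ℂ => (1:ℂ)) (fun M : Matrix (Fin N) (Fin N) ℂ => M i j * star (M k m)) (fun _ : ℂ => (1:ℂ)) (fun _ : ℂ => (1:ℂ)) measurable_const ((measurable_pi_apply j).mul (mst.comp (measurable_pi_apply m))) ((mst.comp (measurable_pi_apply i)).mul (measurable_pi_apply k)) measurable_const (mEE i j k m) measurable_const measurable_const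
      rw [t]
      simp only [integral_const, measure_univ, ENNReal.toReal_one, probReal_univ, one_smul, Vuu, Vvv]
      ring

  have iE2 : ∀ (q : Fin 2) (i j : Fin N), Integrable (fun ω => h ω * (v ω i * (star (Φ q ω i j) * star (u ω j)))) μ := by
    intro q i j
    rcases f2cases q with rfl | rfl
    · exact (KI (fun z : ℂ => z) (fun w : Fin N → ℂ => star (w j)) (fun w : Fin N → ℂ => w i) (fun M : Matrix (Fin N) (Fin N) ℂ => star (M i j)) (fun _ : Matrix (Fin N) (Fin N) ℂ => (1:ℂ)) (fun _ : ℂ => (1:ℂ)) (fun _ : ℂ => (1:ℂ)) measurable_id (mst.comp (measurable_pi_apply j)) (measurable_pi_apply i) (mEs i j) measurable_const measurable_const measurable_const ih (ius j) (iv i) (iΦs 0 i j) (integrable_const (1:ℂ)) (integrable_const (1:ℂ)) (integrable_const (1:ℂ))).congr (Filter.Eventually.of_forall fun ω => by simp only; ring)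
    · exact (KI (fun z : ℂ => z) (fun w : Fin N → ℂ => star (w j)) (fun w : Fin N → ℂ => w i) (fun _ : Matrix (Fin N) (Fin N) ℂ => (1:ℂ)) (fun M : Matrix (Fin N) (Fin N) ℂ => star (M i j)) (fun _ : ℂ => (1:ℂ)) (fun _ : ℂ => (1:ℂ)) measurable_id (mst.comp (measurable_pi_apply j)) (measurable_pi_apply i) measurable_const (mEs i j) measurable_const measurable_const ih (ius j) (iv i) (integrable_const (1:ℂ)) (iΦs 1 i j) (integrable_const (1:ℂ)) (integrable_const (1:ℂ))).congr (Filter.Eventually.of_forall fun ω => by simp only; ring)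

  have iE4 : ∀ (p : Fin 2) (i j : Fin N), Integrable (fun ω => (star (v ω i) * (Φ p ω i j * u ω j)) * star (h ω)) μ := by
    intro p i j
    rcases f2cases p with rfl | rfl
    · exact (KI (fun z : ℂ => star z) (fun w : Fin N → ℂ => w j) (fun w : Fin N → ℂ => star (w i)) (fun M : Matrix (Fin N) (Fin N) ℂ => M i j) (fun _ : Matrix (Fin N) (Fin N) ℂ => (1:ℂ)) (fun _ : ℂ => (1:ℂ)) (fun _ : ℂ => (1:ℂ)) mst (measurable_pi_apply j) (mst.comp (measurable_pi_apply i)) (mE i j) measurable_const measurable_const measurable_const ihs (iu j) (ivs i) (iΦ 0 i j) (integrable_const (1:ℂ)) (integrable_const (1:ℂ)) (integrable_const (1:ℂ))).congr (Filter.Eventually.of_forall fun ω => by simp only; ring)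
    · exact (KI (fun z : ℂ => star z) (fun w : Fin N → ℂ => w j) (fun w : Fin N → ℂ => star (w i)) (fun _ : Matrix (Fin N) (Fin N) ℂ => (1:ℂ)) (fun M : Matrix (Fin N) (Fin N) ℂ => M i j) (fun _ : ℂ => (1:ℂ)) (fun _ : ℂ => (1:ℂ)) mst (measurable_pi_apply j) (mst.comp (measurable_pi_apply i)) measurable_const (mE i j) measurable_const measurable_const ihs (iu j) (ivs i) (integrable_const (1:ℂ)) (iΦ 1 i j) (integrable_const (1:ℂ)) (integrable_const (1:ℂ))).congr (Filter.Eventually.of_forall fun ω => by simp only; ring)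

  have iE5 : ∀ (p q : Fin 2) (i j k m : Fin N), Integrable (fun ω => (star (v ω i) * (Φ p ω i j * u ω j)) * (v ω k * (star (Φ q ω k m) * star (u ω m)))) μ := by
    intro p q i j k m
    rcases f2cases p with rfl | rfl <;> rcases f2cases q with rfl | rfl
    · exact (KI (fun _ : ℂ => (1:ℂ)) (fun w : Fin N → ℂ => w j * star (w m)) (fun w : Fin N → ℂ => star (w i) * w k) (fun M : Matrix (Fin N) (Fin N) ℂ => M i j * star (M k m)) (fun _ : Matrix (Fin N) (Fin N) ℂ => (1:ℂ)) (fun _ : ℂ => (1:ℂ)) (fun _ : ℂ => (1:ℂ)) measurable_const ((measurable_pi_apply j).mul (mst.comp (measurable_pi_apply m))) ((mst.comp (measurable_pi_apply i)).mul (measurable_pi_apply k)) (mEE i j k m) measurable_const measurable_const measurable_const (integrable_const (1:ℂ)) (iuu j m) (ivv i k) (iΦΦ 0 0 i j k m) (integrable_const (1:ℂ)) (integrable_const (1:ℂ)) (integrable_const (1:ℂ))).congr (Filter.Eventually.of_forall fun ω => by simp only; ring)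
    · exact (KI (fun _ : ℂ => (1:ℂ)) (fun w : Fin N → ℂ => w j * star (w m)) (fun w : Fin N → ℂ => star (w i) * w k) (fun M : Matrix (Fin N) (Fin N) ℂ => M i j) (fun M : Matrix (Fin N) (Fin N) ℂ => star (M k m)) (fun _ : ℂ => (1:ℂ)) (fun _ : ℂ => (1:ℂ)) measurable_const ((measurable_pi_apply j).mul (mst.comp (measurable_pi_apply m))) ((mst.comp (measurable_pi_apply i)).mul (measurable_pi_apply k)) (mE i j) (mEs k m) measurable_const measurable_const (integrable_const (1:ℂ)) (iuu j m) (ivv i k) (iΦ 0 i j) (iΦs 1 k m) (integrable_const (1:ℂ)) (integrable_const (1:ℂ))).congr (Filter.Eventually.of_forall fun ω => by simp only; ring)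
    · exact (KI (fun _ : ℂ => (1:ℂ)) (fun w : Fin N → ℂ => w j * star (w m)) (fun w : Fin N → ℂ => star (w i) * w k) (fun M : Matrix (Fin N) (Fin N) ℂ => star (M k m)) (fun M : Matrix (Fin N) (Fin N) ℂ => M i j) (fun _ : ℂ => (1:ℂ)) (fun _ : ℂ => (1:ℂ)) measurable_const ((measurable_pi_apply j).mul (mst.comp (measurable_pi_apply m))) ((mst.comp (measurable_pi_apply i)).mul (measurable_pi_apply k)) (mEs k m) (mE i j) measurable_const measurable_const (integrable_const (1:ℂ)) (iuu j m) (ivv i k) (iΦs 0 k m) (iΦ 1 i j) (integrable_const (1:ℂ)) (integrable_const (1:ℂ))).congr (Filter.Eventually.of_forall fun ω => by simp only; ring)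
    · exact (KI (fun _ : ℂ => (1:ℂ)) (fun w : Fin N → ℂ => w j * star (w m)) (fun w : Fin N → ℂ => star (w i) * w k) (fun _ : Matrix (Fin N) (Fin N) ℂ => (1:ℂ)) (fun M : Matrix (Fin N) (Fin N) ℂ => M i j * star (M k m)) (fun _ : ℂ => (1:ℂ)) (fun _ : ℂ => (1:ℂ)) measurable_const ((measurable_pi_apply j).mul (mst.comp (measurable_pi_apply m))) ((mst.comp (measurable_pi_apply i)).mul (measurable_pi_apply k)) measurable_const (mEE i j k m) measurable_const measurable_const (integrable_const (1:ℂ)) (iuu j m) (ivv i k) (integrable_const (1:ℂ)) (iΦΦ 1 1 i j k m) (integrable_const (1:ℂ)) (integrable_const (1:ℂ))).congr (Filter.Eventually.of_forall fun ω => by simp only; ring)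

  have iE6 : ∀ (p q : Fin 2) (i j : Fin N), Integrable (fun ω => (star (v ω i) * (Φ p ω i j * u ω j)) * star (n q ω)) μ := by
    intro p q i j
    rcases f2cases p with rfl | rfl <;> rcases f2cases q with rfl | rfl
    · exact (KI (fun _ : ℂ => (1:ℂ)) (fun w : Fin N → ℂ => w j) (fun w : Fin N → ℂ => star (w i)) (fun M : Matrix (Fin N) (Fin N) ℂ => M i j) (fun _ : Matrix (Fin N) (Fin N) ℂ => (1:ℂ)) (fun z : ℂ => star z) (fun _ : ℂ => (1:ℂ)) measurable_const (measurable_pi_apply j) (mst.comp (measurable_pi_apply i)) (mE i j) measurable_const mst measurable_const (integrable_const (1:ℂ)) (iu j) (ivs i) (iΦ 0 i j) (integrable_const (1:ℂ)) (inls 0) (integrable_const (1:ℂ))).congr (Filter.Eventually.of_forall fun ω => by simp only; ring)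
    · exact (KI (fun _ : ℂ => (1:ℂ)) (fun w : Fin N → ℂ => w j) (fun w : Fin N → ℂ => star (w i)) (fun M : Matrix (Fin N) (Fin N) ℂ => M i j) (fun _ : Matrix (Fin N) (Fin N) ℂ => (1:ℂ)) (fun _ : ℂ => (1:ℂ)) (fun z : ℂ => star z) measurable_const (measurable_pi_apply j) (mst.comp (measurable_pi_apply i)) (mE i j) measurable_const measurable_const mst (integrable_const (1:ℂ)) (iu j) (ivs i) (iΦ 0 i j) (integrable_const (1:ℂ)) (integrable_const (1:ℂ)) (inls 1)).congr (Filter.Eventually.of_forall fun ω => by simp only; ring)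
    · exact (KI (fun _ : ℂ => (1:ℂ)) (fun w : Fin N → ℂ => w j) (fun w : Fin N → ℂ => star (w i)) (fun _ : Matrix (Fin N) (Fin N) ℂ => (1:ℂ)) (fun M : Matrix (Fin N) (Fin N) ℂ => M i j) (fun z : ℂ => star z) (fun _ : ℂ => (1:ℂ)) measurable_const (measurable_pi_apply j) (mst.comp (measurable_pi_apply i)) measurable_const (mE i j) mst measurable_const (integrable_const (1:ℂ)) (iu j) (ivs i) (integrable_const (1:ℂ)) (iΦ 1 i j) (inls 0) (integrable_const (1:ℂ))).congr (Filter.Eventually.of_forall fun ω => by simp only; ring)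
    · exact (KI (fun _ : ℂ => (1:ℂ)) (fun w : Fin N → ℂ => w j) (fun w : Fin N → ℂ => star (w i)) (fun _ : Matrix (Fin N) (Fin N) ℂ => (1:ℂ)) (fun M : Matrix (Fin N) (Fin N) ℂ => M i j) (fun _ : ℂ => (1:ℂ)) (fun z : ℂ => star z) measurable_const (measurable_pi_apply j) (mst.comp (measurable_pi_apply i)) measurable_const (mE i j) measurable_const mst (integrable_const (1:ℂ)) (iu j) (ivs i) (integrable_const (1:ℂ)) (iΦ 1 i j) (integrable_const (1:ℂ)) (inls 1)).congr (Filter.Eventually.of_forall fun ω => by simp only; ring)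

  have iE8 : ∀ (p q : Fin 2) (i j : Fin N), Integrable (fun ω => n p ω * (v ω i * (star (Φ q ω i j) * star (u ω j)))) μ := by
    intro p q i j
    rcases f2cases p with rfl | rfl <;> rcases f2cases q with rfl | rfl
    · exact (KI (fun _ : ℂ => (1:ℂ)) (fun w : Fin N → ℂ => star (w j)) (fun w : Fin N → ℂ => w i) (fun M : Matrix (Fin N) (Fin N) ℂ => star (M i j)) (fun _ : Matrix (Fin N) (Fin N) ℂ => (1:ℂ)) (fun z : ℂ => z) (fun _ : ℂ => (1:ℂ)) measurable_const (mst.comp (measurable_pi_apply j)) (measurable_pi_apply i) (mEs i j) measurable_const measurable_id measurable_const (integrable_const (1:ℂ)) (ius j) (iv i) (iΦs 0 i j) (integrable_const (1:ℂ)) (inl 0) (integrable_const (1:ℂ))).congr (Filter.Eventually.of_forall fun ω => by simp only; ring)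
    · exact (KI (fun _ : ℂ => (1:ℂ)) (fun w : Fin N → ℂ => star (w j)) (fun w : Fin N → ℂ => w i) (fun _ : Matrix (Fin N) (Fin N) ℂ => (1:ℂ)) (fun M : Matrix (Fin N) (Fin N) ℂ => star (M i j)) (fun z : ℂ => z) (fun _ : ℂ => (1:ℂ)) measurable_const (mst.comp (measurable_pi_apply j)) (measurable_pi_apply i) measurable_const (mEs i j) measurable_id measurable_const (integrable_const (1:ℂ)) (ius j) (iv i) (integrable_const (1:ℂ)) (iΦs 1 i j) (inl 0) (integrable_const (1:ℂ))).congr (Filter.Eventually.of_forall fun ω => by simp only; ring)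
    · exact (KI (fun _ : ℂ => (1:ℂ)) (fun w : Fin N → ℂ => star (w j)) (fun w : Fin N → ℂ => w i) (fun M : Matrix (Fin N) (Fin N) ℂ => star (M i j)) (fun _ : Matrix (Fin N) (Fin N) ℂ => (1:ℂ)) (fun _ : ℂ => (1:ℂ)) (fun z : ℂ => z) measurable_const (mst.comp (measurable_pi_apply j)) (measurable_pi_apply i) (mEs i j) measurable_const measurable_const measurable_id (integrable_const (1:ℂ)) (ius j) (iv i) (iΦs 0 i j) (integrable_const (1:ℂ)) (integrable_const (1:ℂ)) (inl 1)).congr (Filter.Eventually.of_forall fun ω => by simp only; ring)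
    · exact (KI (fun _ : ℂ => (1:ℂ)) (fun w : Fin N → ℂ => star (w j)) (fun w : Fin N → ℂ => w i) (fun _ : Matrix (Fin N) (Fin N) ℂ => (1:ℂ)) (fun M : Matrix (Fin N) (Fin N) ℂ => star (M i j)) (fun _ : ℂ => (1:ℂ)) (fun z : ℂ => z) measurable_const (mst.comp (measurable_pi_apply j)) (measurable_pi_apply i) measurable_const (mEs i j) measurable_const measurable_id (integrable_const (1:ℂ)) (ius j) (iv i) (integrable_const (1:ℂ)) (iΦs 1 i j) (integrable_const (1:ℂ)) (inl 1)).congr (Filter.Eventually.of_forall fun ω => by simp only; ring)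

  have hdot : ∀ (p : Fin 2) ω, star (v ω) ⬝ᵥ ((Φ p ω).mulVec (u ω))
      = ∑ i, ∑ j, star (v ω i) * (Φ p ω i j * u ω j) := by
    intro p ω
    simp [dotProduct, Matrix.mulVec, Finset.mul_sum]
  have L1 : ∀ (r : Fin 2) ω, star (∑ i, ∑ j, star (v ω i) * (Φ r ω i j * u ω j))
      = ∑ i, ∑ j, v ω i * (star (Φ r ω i j) * star (u ω j)) := by
    intro r ω
    simp only [star_sum, star_mul', star_star]
  have L2 : ∀ (r : Fin 2) ω (c : ℂ), c * (∑ i, ∑ j, v ω i * (star (Φ r ω i j) * star (u ω j)))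
      = ∑ i, ∑ j, c * (v ω i * (star (Φ r ω i j) * star (u ω j))) := by
    intro r ω c
    rw [Finset.mul_sum]
    exact Finset.sum_congr rfl fun i _ => Finset.mul_sum _ _ _
  have L3 : ∀ (r : Fin 2) ω (c : ℂ), (∑ i, ∑ j, star (v ω i) * (Φ r ω i j * u ω j)) * c
      = ∑ i, ∑ j, (star (v ω i) * (Φ r ω i j * u ω j)) * c := by
    intro r ω c
    rw [Finset.sum_mul]
    exact Finset.sum_congr rfl fun i _ => Finset.sum_mul _ _ _
  have L4 : ∀ (p q : Fin 2) ω, (∑ i, ∑ j, star (v ω i) * (Φ p ω i j * u ω j))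
        * (∑ k, ∑ m, v ω k * (star (Φ q ω k m) * star (u ω m)))
      = ∑ i, ∑ j, ∑ k, ∑ m,
          (star (v ω i) * (Φ p ω i j * u ω j)) * (v ω k * (star (Φ q ω k m) * star (u ω m))) := by
    intro p q ω
    rw [Finset.sum_mul]
    refine Finset.sum_congr rfl fun i _ => ?_
    rw [Finset.sum_mul]
    refine Finset.sum_congr rfl fun j _ => ?_
    rw [Finset.mul_sum]
    refine Finset.sum_congr rfl fun k _ => ?_
    rw [Finset.mul_sum]
  have expand : ∀ (a b c d e f : ℂ), (a+b+c)*(d+e+f)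
      = a*d + (a*e + (a*f + (b*d + (b*e + (b*f + (c*d + (c*e + c*f))))))) := by
    intro a b c d e f; ring
  have hdec : ∀ (p q : Fin 2) ω, s p ω * star (s q ω) =
      (h ω * star (h ω)) + ((∑ i, ∑ j, h ω * (v ω i * (star (Φ q ω i j) * star (u ω j)))) + ((h ω * star (n q ω)) + ((∑ i, ∑ j, (star (v ω i) * (Φ p ω i j * u ω j)) * star (h ω)) + ((∑ i, ∑ j, ∑ k, ∑ m, (star (v ω i) * (Φ p ω i j * u ω j)) * (v ω k * (star (Φ q ω k m) * star (u ω m)))) + ((∑ i, ∑ j, (star (v ω i) * (Φ p ω i j * u ω j)) * star (n q ω)) + ((n p ω * star (h ω)) + ((∑ i, ∑ j, n p ω * (v ω i * (star (Φ q ω i j) * star (u ω j)))) + ((n p ω * star (n q ω)))))))))) := by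
    intro p q ω
    rw [hs p ω, hs q ω, hdot p ω, hdot q ω, star_add, star_add, L1 q ω, expand,
      L2 q ω (h ω), L3 p ω (star (h ω)), L4 p q ω, L3 p ω (star (n q ω)), L2 q ω (n p ω)]
  -- master formula
  have master : ∀ p q : Fin 2, ∫ ω, s p ω * star (s q ω) ∂μ
      = (∫ ω, h ω * star (h ω) ∂μ)
        + (∑ i, ∑ j, ∑ k, ∑ m, Ru j m * (star (Rv i k) * ∫ ω, Φ p ω i j * star (Φ q ω k m) ∂μ))
        + (∫ ω, n p ω * star (n q ω) ∂μ) := by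
    intro p q
    have iG2 : Integrable (fun ω => ∑ i, ∑ j, h ω * (v ω i * (star (Φ q ω i j) * star (u ω j)))) μ :=
      integrable_finset_sum _ fun i _ => integrable_finset_sum _ fun j _ => iE2 q i j
    have iG3 : Integrable (fun ω => h ω * star (n q ω)) μ :=
      integrable_mul_L2' hhL2 (memLp_star' (hnL2 q))
    have iG4 : Integrable (fun ω => ∑ i, ∑ j, (star (v ω i) * (Φ p ω i j * u ω j)) * star (h ω)) μ :=
      integrable_finset_sum _ fun i _ => integrable_finset_sum _ fun j _ => iE4 p i j
    have iG5 : Integrable (fun ω => ∑ i, ∑ j, ∑ k, ∑ m,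
        (star (v ω i) * (Φ p ω i j * u ω j)) * (v ω k * (star (Φ q ω k m) * star (u ω m)))) μ :=
      integrable_finset_sum _ fun i _ => integrable_finset_sum _ fun j _ =>
        integrable_finset_sum _ fun k _ => integrable_finset_sum _ fun m _ => iE5 p q i j k m
    have iG6 : Integrable (fun ω => ∑ i, ∑ j, (star (v ω i) * (Φ p ω i j * u ω j)) * star (n q ω)) μ :=
      integrable_finset_sum _ fun i _ => integrable_finset_sum _ fun j _ => iE6 p q i j
    have iG7 : Integrable (fun ω => n p ω * star (h ω)) μ :=
      integrable_mul_L2' (hnL2 p) (memLp_star' hhL2)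
    have iG8 : Integrable (fun ω => ∑ i, ∑ j, n p ω * (v ω i * (star (Φ q ω i j) * star (u ω j)))) μ :=
      integrable_finset_sum _ fun i _ => integrable_finset_sum _ fun j _ => iE8 p q i j
    have iG9 : Integrable (fun ω => n p ω * star (n q ω)) μ := inn p q
    rw [show (fun ω => s p ω * star (s q ω)) = (fun ω => (h ω * star (h ω)) + ((∑ i, ∑ j, h ω * (v ω i * (star (Φ q ω i j) * star (u ω j)))) + ((h ω * star (n q ω)) + ((∑ i, ∑ j, (star (v ω i) * (Φ p ω i j * u ω j)) * star (h ω)) + ((∑ i, ∑ j, ∑ k, ∑ m, (star (v ω i) * (Φ p ω i j * u ω j)) * (v ω k * (star (Φ q ω k m) * star (u ω m)))) + ((∑ i, ∑ j, (star (v ω i) * (Φ p ω i j * u ω j)) * star (n q ω)) + ((n p ω * star (h ω)) + ((∑ i, ∑ j, n p ω * (v ω i * (star (Φ q ω i j) * star (u ω j)))) + ((n p ω * star (n q ω))))))))))) from funext fun ω => hdec p q ω]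
    have T9 : Integrable (fun ω => n p ω * star (n q ω)) μ := iG9
    have T8 : Integrable (fun ω => (∑ i, ∑ j, n p ω * (v ω i * (star (Φ q ω i j) * star (u ω j)))) + ((n p ω * star (n q ω)))) μ := (iG8).add T9
    have T7 : Integrable (fun ω => (n p ω * star (h ω)) + ((∑ i, ∑ j, n p ω * (v ω i * (star (Φ q ω i j) * star (u ω j)))) + ((n p ω * star (n q ω))))) μ := (iG7).add T8
    have T6 : Integrable (fun ω => (∑ i, ∑ j, (star (v ω i) * (Φ p ω i j * u ω j)) * star (n q ω)) + ((n p ω * star (h ω)) + ((∑ i, ∑ j, n p ω * (v ω i * (star (Φ q ω i j) * star (u ω j)))) + ((n p ω * star (n q ω)))))) μ := (iG6).add T7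
    have T5 : Integrable (fun ω => (∑ i, ∑ j, ∑ k, ∑ m, (star (v ω i) * (Φ p ω i j * u ω j)) * (v ω k * (star (Φ q ω k m) * star (u ω m)))) + ((∑ i, ∑ j, (star (v ω i) * (Φ p ω i j * u ω j)) * star (n q ω)) + ((n p ω * star (h ω)) + ((∑ i, ∑ j, n p ω * (v ω i * (star (Φ q ω i j) * star (u ω j)))) + ((n p ω * star (n q ω))))))) μ := (iG5).add T6
    have T4 : Integrable (fun ω => (∑ i, ∑ j, (star (v ω i) * (Φ p ω i j * u ω j)) * star (h ω)) + ((∑ i, ∑ j, ∑ k, ∑ m, (star (v ω i) * (Φ p ω i j * u ω j)) * (v ω k * (star (Φ q ω k m) * star (u ω m)))) + ((∑ i, ∑ j, (star (v ω i) * (Φ p ω i j * u ω j)) * star (n q ω)) + ((n p ω * star (h ω)) + ((∑ i, ∑ j, n p ω * (v ω i * (star (Φ q ω i j) * star (u ω j)))) + ((n p ω * star (n q ω)))))))) μ := (iG4).add T5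
    have T3 : Integrable (fun ω => (h ω * star (n q ω)) + ((∑ i, ∑ j, (star (v ω i) * (Φ p ω i j * u ω j)) * star (h ω)) + ((∑ i, ∑ j, ∑ k, ∑ m, (star (v ω i) * (Φ p ω i j * u ω j)) * (v ω k * (star (Φ q ω k m) * star (u ω m)))) + ((∑ i, ∑ j, (star (v ω i) * (Φ p ω i j * u ω j)) * star (n q ω)) + ((n p ω * star (h ω)) + ((∑ i, ∑ j, n p ω * (v ω i * (star (Φ q ω i j) * star (u ω j)))) + ((n p ω * star (n q ω))))))))) μ := (iG3).add T4
    have T2 : Integrable (fun ω => (∑ i, ∑ j, h ω * (v ω i * (star (Φ q ω i j) * star (u ω j)))) + ((h ω * star (n q ω)) + ((∑ i, ∑ j, (star (v ω i) * (Φ p ω i j * u ω j)) * star (h ω)) + ((∑ i, ∑ j, ∑ k, ∑ m, (star (v ω i) * (Φ p ω i j * u ω j)) * (v ω k * (star (Φ q ω k m) * star (u ω m)))) + ((∑ i, ∑ j, (star (v ω i) * (Φ p ω i j * u ω j)) * star (n q ω)) + ((n p ω * star (h ω)) + ((∑ i, ∑ j, n p ω * (v ω i * (star (Φ q ω i j)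 * star (u ω j)))) + ((n p ω * star (n q ω)))))))))) μ := (iG2).add T3
    have e1 := integral_add (μ := μ) ihh T2
    rw [e1]
    have e2 := integral_add (μ := μ) iG2 T3
    rw [e2]
    have e3 := integral_add (μ := μ) iG3 T4
    rw [e3]
    have e4 := integral_add (μ := μ) iG4 T5
    rw [e4]
    have e5 := integral_add (μ := μ) iG5 T6
    rw [e5]
    have e6 := integral_add (μ := μ) iG6 T7
    rw [e6]
    have e7 := integral_add (μ := μ) iG7 T8
    rw [e7]
    have e8 := integral_add (μ := μ) iG8 T9
    rw [e8]
    have VG2 : ∫ ω, ∑ i, ∑ j, h ω * (v ω i * (star (Φ q ω i j) * star (u ω j))) ∂μ = 0 := by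
      rw [integral_finset_sum _ (fun i _ => integrable_finset_sum _ fun j _ => iE2 q i j)]
      refine Finset.sum_eq_zero fun i _ => ?_
      rw [integral_finset_sum _ (fun j _ => iE2 q i j)]
      exact Finset.sum_eq_zero fun j _ => E2 q i j
    have VG4 : ∫ ω, ∑ i, ∑ j, (star (v ω i) * (Φ p ω i j * u ω j)) * star (h ω) ∂μ = 0 := by
      rw [integral_finset_sum _ (fun i _ => integrable_finset_sum _ fun j _ => iE4 p i j)]
      refine Finset.sum_eq_zero fun i _ => ?_
      rw [integral_finset_sum _ (fun j _ => iE4 p i j)]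
      exact Finset.sum_eq_zero fun j _ => E4 p i j
    have VG6 : ∫ ω, ∑ i, ∑ j, (star (v ω i) * (Φ p ω i j * u ω j)) * star (n q ω) ∂μ = 0 := by
      rw [integral_finset_sum _ (fun i _ => integrable_finset_sum _ fun j _ => iE6 p q i j)]
      refine Finset.sum_eq_zero fun i _ => ?_
      rw [integral_finset_sum _ (fun j _ => iE6 p q i j)]
      exact Finset.sum_eq_zero fun j _ => E6 p q i j
    have VG8 : ∫ ω, ∑ i, ∑ j, n p ω * (v ω i * (star (Φ q ω i j) * star (u ω j))) ∂μ = 0 := by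
      rw [integral_finset_sum _ (fun i _ => integrable_finset_sum _ fun j _ => iE8 p q i j)]
      refine Finset.sum_eq_zero fun i _ => ?_
      rw [integral_finset_sum _ (fun j _ => iE8 p q i j)]
      exact Finset.sum_eq_zero fun j _ => E8 p q i j
    have VG5 : ∫ ω, ∑ i, ∑ j, ∑ k, ∑ m,
        (star (v ω i) * (Φ p ω i j * u ω j)) * (v ω k * (star (Φ q ω k m) * star (u ω m))) ∂μ
        = ∑ i, ∑ j, ∑ k, ∑ m, Ru j m * (star (Rv i k) * ∫ ω, Φ p ω i j * star (Φ q ω k m) ∂μ) := by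
      rw [integral_finset_sum _ (fun i _ => integrable_finset_sum _ fun j _ =>
        integrable_finset_sum _ fun k _ => integrable_finset_sum _ fun m _ => iE5 p q i j k m)]
      refine Finset.sum_congr rfl fun i _ => ?_
      rw [integral_finset_sum _ (fun j _ => integrable_finset_sum _ fun k _ =>
        integrable_finset_sum _ fun m _ => iE5 p q i j k m)]
      refine Finset.sum_congr rfl fun j _ => ?_
      rw [integral_finset_sum _ (fun k _ => integrable_finset_sum _ fun m _ => iE5 p q i j k m)]
      refine Finset.sum_congr rfl fun k _ => ?_
      rw [integral_finset_sum _ (fun m _ => iE5 p q i j k m)]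
      exact Finset.sum_congr rfl fun m _ => E5 p q i j k m
    rw [VG2, VG4, VG5, VG6, VG8, E3 q, E7 p]
    ring
  -- pointwise trace identity under the integral, for the variance
  have hint : ∀ (l : Fin 2), ∫ ω, (Ru * (Φ l ω)ᴴ * Rv * Φ l ω).trace ∂μ
      = ∑ i, ∑ j, ∑ k, ∑ m, Ru j m * (Rv k i * ∫ ω, Φ l ω i j * star (Φ l ω k m) ∂μ) := by
    intro l
    have iT : ∀ (i j k m : Fin N),
        Integrable (fun ω => Ru j m * (Rv k i * (Φ l ω i j * star (Φ l ω k m)))) μ :=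
      fun i j k m => ((iΦΦ l l i j k m).const_mul (Rv k i)).const_mul (Ru j m)
    simp only [trace_formula]
    rw [integral_finset_sum _ (fun i _ => integrable_finset_sum _ fun j _ =>
      integrable_finset_sum _ fun k _ => integrable_finset_sum _ fun m _ => iT i j k m)]
    refine Finset.sum_congr rfl fun i _ => ?_
    rw [integral_finset_sum _ (fun j _ => integrable_finset_sum _ fun k _ =>
      integrable_finset_sum _ fun m _ => iT i j k m)]
    refine Finset.sum_congr rfl fun j _ => ?_
    rw [integral_finset_sum _ (fun k _ => integrable_finset_sum _ fun m _ => iT i j k m)]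
    refine Finset.sum_congr rfl fun k _ => ?_
    rw [integral_finset_sum _ (fun m _ => iT i j k m)]
    refine Finset.sum_congr rfl fun m _ => ?_
    rw [integral_const_mul, integral_const_mul]
  -- part (i)
  have part1 : ∫ ω, s 0 ω * star (s 1 ω) ∂μ = (β : ℂ) + (Ru * (EΦ 1)ᴴ * Rv * EΦ 0).trace := by
    have m01 := master 0 1
    rw [hβ, hnuncorr, add_zero] at m01
    simp only [EP01, VΦ, VΦs] at m01
    rw [m01, trace_formula]
    simp only [hRvh]
  -- part (ii)
  have part2 : ∀ l : Fin 2, ∫ ω, s l ω * star (s l ω) ∂μ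
      = (β : ℂ) + (∫ ω, (Ru * (Φ l ω)ᴴ * Rv * Φ l ω).trace ∂μ) + (σ2 : ℂ) := by
    intro l
    have mll := master l l
    rw [hβ, hσ l] at mll
    rw [mll, hint l]
    simp only [hRvh]
  exact ⟨part1, part2, fun l => by rw [part1, part2 l]⟩
end

section
/- Correlation of consecutive probings under equal phase shifts, direct path present (Lemma 2). Suppose Φ_p(ω) = exp(I · φ_p(ω)) · (identity matrix) for p ∈ {1,2}, where φ₁, φ₂ are independent real random variables, each uniform on (−π, π), independent of (h, u, v, n₁, n₂). Assume the family (h, u, v, n₁, n₂) is mutually independent, all (entrywise) zero-mean and square-integrable, E[|h|²] = β, E[|n₁|²] = E[|n₂|²] = σ², E[n₁ · conj(n₂)] = 0. Then E[s₁ · conj(s₂)] = β and E[|s_l|²] = β + trace(R_v · R_u) + σ² for l ∈ {1,2}; hence the correlation coefficient ρ = E[s₁ · conj(s₂)] / E[|s_l|²] equals β / (β + trace(R_v · R_u) + σ²). -/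
open MeasureTheory ProbabilityTheory Matrix Complex Real

section Helpers

variable {Ω α β : Type*} [MeasurableSpace Ω] [MeasurableSpace α] [MeasurableSpace β]

lemma aux_indep_integral_mul {μ : Measure Ω} [IsProbabilityMeasure μ] {X : Ω → α} {Y : Ω → β}
    (hX : Measurable X) (hY : Measurable Y) (hXY : IndepFun X Y μ)
    {f : α → ℂ} {g : β → ℂ} (hf : Measurable f) (hg : Measurable g) :
    ∫ ω, f (X ω) * g (Y ω) ∂μ = (∫ ω, f (X ω) ∂μ) * ∫ ω, g (Y ω) ∂μ := by
  have hmap : μ.map (fun ω => (X ω, Y ω)) = (μ.map X).prod (μ.map Y) :=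
    (indepFun_iff_map_prod_eq_prod_map_map hX.aemeasurable hY.aemeasurable).mp hXY
  have h1 : ∫ ω, f (X ω) * g (Y ω) ∂μ
      = ∫ p : α × β, f p.1 * g p.2 ∂(μ.map (fun ω => (X ω, Y ω))) :=
    (integral_map (hX.prodMk hY).aemeasurable
      (((hf.comp measurable_fst).mul (hg.comp measurable_snd)).aestronglyMeasurable)).symm
  have : IsProbabilityMeasure (μ.map X) := Measure.isProbabilityMeasure_map hX.aemeasurable
  have : IsProbabilityMeasure (μ.map Y) := Measure.isProbabilityMeasure_map hY.aemeasurable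
  rw [h1, hmap, integral_prod_mul,
    integral_map hX.aemeasurable hf.aestronglyMeasurable,
    integral_map hY.aemeasurable hg.aestronglyMeasurable]

lemma aux_indep_integrable_mul {μ : Measure Ω} [IsProbabilityMeasure μ] {X : Ω → α} {Y : Ω → β}
    (hX : Measurable X) (hY : Measurable Y) (hXY : IndepFun X Y μ)
    {f : α → ℂ} {g : β → ℂ} (hf : Measurable f) (hg : Measurable g)
    (hfi : Integrable (fun ω => f (X ω)) μ) (hgi : Integrable (fun ω => g (Y ω)) μ) :
    Integrable (fun ω => f (X ω) * g (Y ω)) μ := by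
  have hmap : μ.map (fun ω => (X ω, Y ω)) = (μ.map X).prod (μ.map Y) :=
    (indepFun_iff_map_prod_eq_prod_map_map hX.aemeasurable hY.aemeasurable).mp hXY
  have : IsProbabilityMeasure (μ.map Y) := Measure.isProbabilityMeasure_map hY.aemeasurable
  have h1 : Integrable f (μ.map X) :=
    (integrable_map_measure hf.aestronglyMeasurable hX.aemeasurable).mpr hfi
  have h2 : Integrable g (μ.map Y) :=
    (integrable_map_measure hg.aestronglyMeasurable hY.aemeasurable).mpr hgi
  have h3 : Integrable (fun p : α × β => f p.1 * g p.2) ((μ.map X).prod (μ.map Y)) :=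
    h1.mul_prod h2
  rw [← hmap] at h3
  exact (integrable_map_measure
    ((hf.comp measurable_fst).mul (hg.comp measurable_snd)).aestronglyMeasurable
    (hX.prodMk hY).aemeasurable).mp h3

lemma aux_L2_mul {μ : Measure Ω} {f g : Ω → ℂ} (hf : MemLp f 2 μ) (hg : MemLp g 2 μ) :
    Integrable (fun ω => f ω * g ω) μ := by
  rw [← memLp_one_iff_integrable]
  refine ⟨hf.1.mul hg.1, ?_⟩
  have hle := eLpNorm_le_eLpNorm_mul_eLpNorm_of_nnnorm (p := 2) (q := 2) (r := 1) hf.1 hg.1 (· * ·) 1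
    (Filter.Eventually.of_forall fun x => by simp [nnnorm_mul])
  exact lt_of_le_of_lt hle (by simpa using ENNReal.mul_lt_top hf.2 hg.2)

lemma aux_memℒp_star {μ : Measure Ω} {f : Ω → ℂ} (hf : MemLp f 2 μ) :
    MemLp (fun ω => star (f ω)) 2 μ :=
  hf.of_le (continuous_star.comp_aestronglyMeasurable hf.1)
    (Filter.Eventually.of_forall fun x => by simp)

lemma aux_unif_exp_zero {c : ℂ} (hc : c = Complex.I ∨ c = -Complex.I) :
    ∫ x : ℝ, Complex.exp (c * x)
      ∂((ENNReal.ofReal (2 * π))⁻¹ • (volume.restrict (Set.Ioo (-π) π))) = 0 := by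
  rw [integral_smul_measure]
  have h0 : ∫ x : ℝ, Complex.exp (c * x) ∂(volume.restrict (Set.Ioo (-π) π)) = 0 := by
    have hne : c ≠ 0 := by rcases hc with rfl | rfl <;> simp [Complex.I_ne_zero]
    have h1 : ∫ x in Set.Ioo (-π) π, Complex.exp (c * x) ∂volume
        = ∫ x in (-π)..π, Complex.exp (c * x) := by
      rw [intervalIntegral.integral_of_le (by linarith [Real.pi_pos] : -π ≤ π),
        integral_Ioc_eq_integral_Ioo]
    rw [h1, integral_exp_mul_complex hne]
    have he : Complex.exp (c * π) = Complex.exp (c * (-π : ℝ)) := by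
      have e1 : Complex.exp (π * Complex.I) = -1 := Complex.exp_pi_mul_I
      have e2 : Complex.exp (-(π * Complex.I)) = -1 := by
        rw [Complex.exp_neg, e1]; norm_num
      rcases hc with rfl | rfl <;> push_cast
      · rw [show Complex.I * (π:ℂ) = π * Complex.I by ring,
            show Complex.I * -(π:ℂ) = -(π * Complex.I) by ring, e1, e2]
      · rw [show -Complex.I * (π:ℂ) = -(π * Complex.I) by ring,
            show -Complex.I * -(π:ℂ) = π * Complex.I by ring, e1, e2]
    rw [he, sub_self, zero_div]
  rw [h0, smul_zero]

end Helpers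

/-- **Lemma 2** (correlation of consecutive probings under equal phase shifts,
direct path present).  `Φ p ω = exp (I * φ p ω) • 1`, where `φ 0, φ 1` are
independent, uniform on `(-π, π)`, and independent of `(h, u, v, n₁, n₂)`. -/
theorem correlation_consecutive_probings_EPS_with_direct
    {Ω : Type*} [MeasurableSpace Ω] (μ : Measure Ω) [IsProbabilityMeasure μ]
    {N : ℕ} (hN : 1 ≤ N)
    (h : Ω → ℂ) (u v : Ω → Fin N → ℂ)
    (φ : Fin 2 → Ω → ℝ)
    (n : Fin 2 → Ω → ℂ)
    (s : Fin 2 → Ω → ℂ)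
    (hs : ∀ p ω, s p ω = h ω
        + star (v ω) ⬝ᵥ
            ((Complex.exp (Complex.I * (φ p ω : ℂ)) •
              (1 : Matrix (Fin N) (Fin N) ℂ)).mulVec (u ω))
        + n p ω)
    -- measurability
    (hhm : Measurable h) (hum : Measurable u) (hvm : Measurable v)
    (hφm : ∀ p, Measurable (φ p)) (hnm : ∀ p, Measurable (n p))
    -- the two phases are independent and uniform on (-π, π)
    (hφindep : IndepFun (φ 0) (φ 1) μ)
    (hφunif : ∀ p, μ.map (φ p)
        = (ENNReal.ofReal (2 * π))⁻¹ • (volume.restrict (Set.Ioo (-π) π)))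
    -- the pair of phases is independent of (h, u, v, n₁, n₂)
    (hφrest : IndepFun (fun ω => (φ 0 ω, φ 1 ω))
        (fun ω => (h ω, u ω, v ω, n 0 ω, n 1 ω)) μ)
    -- (h, u, v, n₁, n₂) mutually independent: joint law = product of laws
    (hindep : μ.map (fun ω => (h ω, u ω, v ω, n 0 ω, n 1 ω)) =
        (μ.map h).prod ((μ.map u).prod ((μ.map v).prod
          ((μ.map (n 0)).prod (μ.map (n 1))))))
    -- square integrability
    (hhL2 : MemLp h 2 μ) (hnL2 : ∀ p, MemLp (n p) 2 μ)
    (huL2 : ∀ i, MemLp (fun ω => u ω i) 2 μ)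
    (hvL2 : ∀ i, MemLp (fun ω => v ω i) 2 μ)
    -- zero means
    (hhmean : ∫ ω, h ω ∂μ = 0)
    (hnmean : ∀ p, ∫ ω, n p ω ∂μ = 0)
    (humean : ∀ i, ∫ ω, u ω i ∂μ = 0)
    (hvmean : ∀ i, ∫ ω, v ω i ∂μ = 0)
    -- second moments
    (β σ2 : ℝ)
    (hβ : ∫ ω, h ω * star (h ω) ∂μ = (β : ℂ))
    (hσ : ∀ p, ∫ ω, n p ω * star (n p ω) ∂μ = (σ2 : ℂ))
    (hnuncorr : ∫ ω, n 0 ω * star (n 1 ω) ∂μ = 0)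
    -- covariance matrices of the IRS channel vectors
    (Ru Rv : Matrix (Fin N) (Fin N) ℂ)
    (hRu : ∀ i j, Ru i j = ∫ ω, u ω i * star (u ω j) ∂μ)
    (hRv : ∀ i j, Rv i j = ∫ ω, v ω i * star (v ω j) ∂μ) :
    -- cross-correlation
    (∫ ω, s 0 ω * star (s 1 ω) ∂μ = (β : ℂ)) ∧
    -- variance of each sample
    (∀ l : Fin 2, ∫ ω, s l ω * star (s l ω) ∂μ
        = (β : ℂ) + (Rv * Ru).trace + (σ2 : ℂ)) ∧
    -- correlation coefficient
    (∀ l : Fin 2,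
      (∫ ω, s 0 ω * star (s 1 ω) ∂μ) / (∫ ω, s l ω * star (s l ω) ∂μ)
        = (β : ℂ) / ((β : ℂ) + (Rv * Ru).trace + (σ2 : ℂ))) := by
  classical
  -- the compound channel
  set g : Ω → ℂ := fun ω => star (v ω) ⬝ᵥ u ω with hgdef
  have hs' : ∀ p ω, s p ω = h ω + Complex.exp (Complex.I * φ p ω) * g ω + n p ω := by
    intro p ω
    rw [hs p ω, Matrix.smul_mulVec, Matrix.one_mulVec, dotProduct_smul,
      smul_eq_mul]
  have mstar : Measurable (fun z : ℂ => star z) := continuous_star.measurable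
  have hgm : Measurable g := by
    rw [hgdef]
    simp only [dotProduct, Pi.star_apply]
    exact Finset.measurable_sum _ fun i _ =>
      ((mstar.comp ((measurable_pi_apply i).comp hvm)).mul ((measurable_pi_apply i).comp hum))
  -- phase maps and the joint vector
  set X : Ω → ℝ × ℝ := fun ω => (φ 0 ω, φ 1 ω) with hXdef
  set Y : Ω → ℂ × ((Fin N → ℂ) × ((Fin N → ℂ) × (ℂ × ℂ))) :=
    fun ω => (h ω, u ω, v ω, n 0 ω, n 1 ω) with hYdef
  have hXm : Measurable X := (hφm 0).prodMk (hφm 1)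
  have hYm : Measurable Y :=
    hhm.prodMk (hum.prodMk (hvm.prodMk ((hnm 0).prodMk (hnm 1))))
  -- independence bookkeeping
  have hmh : IsProbabilityMeasure (μ.map h) := Measure.isProbabilityMeasure_map hhm.aemeasurable
  have hmu : IsProbabilityMeasure (μ.map u) := Measure.isProbabilityMeasure_map hum.aemeasurable
  have hrest4m : Measurable (fun ω => (u ω, v ω, n 0 ω, n 1 ω)) :=
    hum.prodMk (hvm.prodMk ((hnm 0).prodMk (hnm 1)))
  have hrest3m : Measurable (fun ω => (v ω, n 0 ω, n 1 ω)) :=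
    hvm.prodMk ((hnm 0).prodMk (hnm 1))
  have hmap4 : μ.map (fun ω => (u ω, v ω, n 0 ω, n 1 ω))
      = (μ.map u).prod ((μ.map v).prod ((μ.map (n 0)).prod (μ.map (n 1)))) := by
    have e : (fun ω => (u ω, v ω, n 0 ω, n 1 ω)) = Prod.snd ∘ Y := rfl
    rw [e, ← Measure.map_map measurable_snd hYm, hindep, Measure.map_snd_prod,
      measure_univ, one_smul]
  have hmap3 : μ.map (fun ω => (v ω, n 0 ω, n 1 ω))
      = (μ.map v).prod ((μ.map (n 0)).prod (μ.map (n 1))) := by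
    have e : (fun ω => (v ω, n 0 ω, n 1 ω))
        = Prod.snd ∘ (fun ω => (u ω, v ω, n 0 ω, n 1 ω)) := rfl
    rw [e, ← Measure.map_map measurable_snd hrest4m, hmap4, Measure.map_snd_prod,
      measure_univ, one_smul]
  have Ih : IndepFun h (fun ω => (u ω, v ω, n 0 ω, n 1 ω)) μ := by
    rw [indepFun_iff_map_prod_eq_prod_map_map hhm.aemeasurable hrest4m.aemeasurable]
    rw [show (fun ω => (h ω, (u ω, v ω, n 0 ω, n 1 ω))) = Y from rfl, hindep, hmap4]
  have Iu3 : IndepFun u (fun ω => (v ω, n 0 ω, n 1 ω)) μ := by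
    rw [indepFun_iff_map_prod_eq_prod_map_map hum.aemeasurable hrest3m.aemeasurable]
    rw [show (fun ω => (u ω, (v ω, n 0 ω, n 1 ω)))
        = (fun ω => (u ω, v ω, n 0 ω, n 1 ω)) from rfl, hmap4, hmap3]
  have Iuv : IndepFun u v μ := by
    have := Iu3.comp (measurable_id) (measurable_fst)
    exact this
  have Ihn : ∀ l : Fin 2, IndepFun h (n l) μ := by
    intro l
    fin_cases l
    · exact Ih.comp measurable_id (measurable_snd.snd.fst)
    · exact Ih.comp measurable_id (measurable_snd.snd.snd)
  -- phase integrals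
  have hexpm : ∀ c : ℂ, Measurable (fun x : ℝ => Complex.exp (c * x)) := fun c =>
    Complex.continuous_exp.measurable.comp (measurable_const.mul Complex.measurable_ofReal)
  have Ephase : ∀ (c : ℂ), (c = Complex.I ∨ c = -Complex.I) →
      ∀ l : Fin 2, ∫ ω, Complex.exp (c * φ l ω) ∂μ = 0 := by
    intro c hc l
    rw [← integral_map (hφm l).aemeasurable (hexpm c).aestronglyMeasurable, hφunif l]
    exact aux_unif_exp_zero hc
  have hstar_exp : ∀ x : ℝ, star (Complex.exp (Complex.I * x))
      = Complex.exp (-Complex.I * x) := by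
    intro x
    have : star (Complex.exp (Complex.I * x))
        = (starRingEnd ℂ) (Complex.exp (Complex.I * x)) := rfl
    rw [this, ← Complex.exp_conj]
    congr 1
    simp
  have hnorm1 : ∀ (c : ℂ), (c = Complex.I ∨ c = -Complex.I) →
      ∀ x : ℝ, ‖Complex.exp (c * x)‖ = 1 := by
    intro c hc x
    have hre : (c * (x : ℂ)).re = 0 := by rcases hc with rfl | rfl <;> simp
    rw [Complex.norm_exp, hre, Real.exp_zero]
  -- L² of g
  have hterm_int : ∀ i j, Integrable
      (fun ω => (u ω i * star (u ω j)) * (v ω j * star (v ω i))) μ := by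
    intro i j
    exact aux_indep_integrable_mul hum hvm Iuv
      (f := fun x : Fin N → ℂ => x i * star (x j))
      (g := fun y : Fin N → ℂ => y j * star (y i))
      ((measurable_pi_apply i).mul (mstar.comp (measurable_pi_apply j)))
      ((measurable_pi_apply j).mul (mstar.comp (measurable_pi_apply i)))
      (aux_L2_mul (huL2 i) (aux_memℒp_star (huL2 j)))
      (aux_L2_mul (hvL2 j) (aux_memℒp_star (hvL2 i)))
  have hgg_eq : ∀ ω, g ω * star (g ω)
      = ∑ i, ∑ j, (u ω i * star (u ω j)) * (v ω j * star (v ω i)) := by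
    intro ω
    rw [hgdef]
    simp only [dotProduct, Pi.star_apply, star_sum, star_mul', star_star]
    rw [Finset.sum_mul_sum]
    exact Finset.sum_congr rfl fun i _ => Finset.sum_congr rfl fun j _ => by ring
  have hgg_int : Integrable (fun ω => g ω * star (g ω)) μ := by
    have h2 : Integrable
        (fun ω => ∑ i, ∑ j, (u ω i * star (u ω j)) * (v ω j * star (v ω i))) μ :=
      integrable_finset_sum _ fun i _ => integrable_finset_sum _ fun j _ => hterm_int i j
    exact h2.congr (Filter.Eventually.of_forall fun ω => (hgg_eq ω).symm)
  have hgL2 : MemLp g 2 μ := by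
    rw [memLp_two_iff_integrable_sq_norm hgm.aestronglyMeasurable]
    have := hgg_int.re
    refine this.congr (Filter.Eventually.of_forall fun ω => ?_)
    simp [Complex.mul_conj, Complex.normSq_eq_norm_sq, ← Complex.ofReal_pow]
  -- value of E[g * conj g]
  have Egg : ∫ ω, g ω * star (g ω) ∂μ = (Rv * Ru).trace := by
    rw [integral_congr_ae (Filter.Eventually.of_forall hgg_eq),
      integral_finset_sum _ (fun i _ => integrable_finset_sum _ fun j _ => hterm_int i j)]
    have e1 : ∀ i, ∫ ω, ∑ j, (u ω i * star (u ω j)) * (v ω j * star (v ω i)) ∂μ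
        = ∑ j, Ru i j * Rv j i := by
      intro i
      rw [integral_finset_sum _ fun j _ => hterm_int i j]
      refine Finset.sum_congr rfl fun j _ => ?_
      rw [aux_indep_integral_mul hum hvm Iuv
        (f := fun x : Fin N → ℂ => x i * star (x j))
        (g := fun y : Fin N → ℂ => y j * star (y i))
        ((measurable_pi_apply i).mul (mstar.comp (measurable_pi_apply j)))
        ((measurable_pi_apply j).mul (mstar.comp (measurable_pi_apply i))),
        ← hRu i j, ← hRv j i]
    rw [Finset.sum_congr rfl fun i _ => e1 i]
    simp only [Matrix.trace, Matrix.diag, Matrix.mul_apply]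
    rw [Finset.sum_comm]
    exact Finset.sum_congr rfl fun j _ => Finset.sum_congr rfl fun i _ => mul_comm _ _
  -- the main expansion, generic in the two probing indices
  have main : ∀ (p q : Fin 2) (prp prq : ℝ × ℝ → ℝ), Measurable prp → Measurable prq →
      (∀ ω, prp (X ω) = φ p ω) → (∀ ω, prq (X ω) = φ q ω) →
      ∫ ω, s p ω * star (s q ω) ∂μ
        = (β : ℂ)
          + (∫ ω, Complex.exp (Complex.I * φ p ω)
              * Complex.exp (-Complex.I * φ q ω) ∂μ) * (Rv * Ru).trace
          + ∫ ω, n p ω * star (n q ω) ∂μ := by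
    intro p q prp prq hprpm hprqm hp hq
    -- the nine terms
    set T1 : Ω → ℂ := fun ω => h ω * star (h ω) with hT1
    set T2 : Ω → ℂ := fun ω => Complex.exp (-Complex.I * φ q ω) * (h ω * star (g ω)) with hT2
    set T3 : Ω → ℂ := fun ω => h ω * star (n q ω) with hT3
    set T4 : Ω → ℂ := fun ω => Complex.exp (Complex.I * φ p ω) * (g ω * star (h ω)) with hT4
    set T5 : Ω → ℂ := fun ω => (Complex.exp (Complex.I * φ p ω)
        * Complex.exp (-Complex.I * φ q ω)) * (g ω * star (g ω)) with hT5
    set T6 : Ω → ℂ := fun ω => Complex.exp (Complex.I * φ p ω) * (g ω * star (n q ω)) with hT6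
    set T7 : Ω → ℂ := fun ω => n p ω * star (h ω) with hT7
    set T8 : Ω → ℂ := fun ω => Complex.exp (-Complex.I * φ q ω) * (n p ω * star (g ω)) with hT8
    set T9 : Ω → ℂ := fun ω => n p ω * star (n q ω) with hT9
    -- integrability of each term
    have bdd1 : ∀ (c : ℂ), (c = Complex.I ∨ c = -Complex.I) → ∀ l : Fin 2,
        AEStronglyMeasurable (fun ω => Complex.exp (c * φ l ω)) μ :=
      fun c hc l => ((hexpm c).comp (hφm l)).aestronglyMeasurable
    have i1 : Integrable T1 μ := aux_L2_mul hhL2 (aux_memℒp_star hhL2)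
    have i2 : Integrable T2 μ :=
      (aux_L2_mul hhL2 (aux_memℒp_star hgL2)).bdd_mul (bdd1 _ (Or.inr rfl) q)
        (Filter.Eventually.of_forall fun ω => le_of_eq (hnorm1 _ (Or.inr rfl) _))
    have i3 : Integrable T3 μ := aux_L2_mul hhL2 (aux_memℒp_star (hnL2 q))
    have i4 : Integrable T4 μ :=
      (aux_L2_mul hgL2 (aux_memℒp_star hhL2)).bdd_mul (bdd1 _ (Or.inl rfl) p)
        (Filter.Eventually.of_forall fun ω => le_of_eq (hnorm1 _ (Or.inl rfl) _))
    have i5 : Integrable T5 μ := by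
      refine hgg_int.bdd_mul ((bdd1 _ (Or.inl rfl) p).mul (bdd1 _ (Or.inr rfl) q)) (c := 1) (Filter.Eventually.of_forall fun ω => ?_)
      rw [norm_mul, hnorm1 _ (Or.inl rfl), hnorm1 _ (Or.inr rfl), one_mul]
    have i6 : Integrable T6 μ :=
      (aux_L2_mul hgL2 (aux_memℒp_star (hnL2 q))).bdd_mul (bdd1 _ (Or.inl rfl) p)
        (Filter.Eventually.of_forall fun ω => le_of_eq (hnorm1 _ (Or.inl rfl) _))
    have i7 : Integrable T7 μ := aux_L2_mul (hnL2 p) (aux_memℒp_star hhL2)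
    have i8 : Integrable T8 μ :=
      (aux_L2_mul (hnL2 p) (aux_memℒp_star hgL2)).bdd_mul (bdd1 _ (Or.inr rfl) q)
        (Filter.Eventually.of_forall fun ω => le_of_eq (hnorm1 _ (Or.inr rfl) _))
    have i9 : Integrable T9 μ := aux_L2_mul (hnL2 p) (aux_memℒp_star (hnL2 q))
    -- pointwise expansion
    have hexp : ∀ ω, s p ω * star (s q ω)
        = T1 ω + (T2 ω + (T3 ω + (T4 ω + (T5 ω + (T6 ω + (T7 ω + (T8 ω + T9 ω))))))) := by
      intro ω
      rw [hs' p ω, hs' q ω]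
      simp only [hT1, hT2, hT3, hT4, hT5, hT6, hT7, hT8, hT9, star_add, star_mul']
      rw [hstar_exp (φ q ω)]
      ring
    rw [integral_congr_ae (Filter.Eventually.of_forall hexp)]
    have a9 : Integrable (fun ω => T8 ω + T9 ω) μ := i8.add i9
    have a8 : Integrable (fun ω => T7 ω + (T8 ω + T9 ω)) μ := i7.add a9
    have a7 : Integrable (fun ω => T6 ω + (T7 ω + (T8 ω + T9 ω))) μ := i6.add a8
    have a6 : Integrable (fun ω => T5 ω + (T6 ω + (T7 ω + (T8 ω + T9 ω)))) μ := i5.add a7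
    have a5 : Integrable (fun ω => T4 ω + (T5 ω + (T6 ω + (T7 ω + (T8 ω + T9 ω))))) μ :=
      i4.add a6
    have a4 : Integrable (fun ω => T3 ω + (T4 ω + (T5 ω + (T6 ω + (T7 ω + (T8 ω + T9 ω)))))) μ :=
      i3.add a5
    have a3 : Integrable
        (fun ω => T2 ω + (T3 ω + (T4 ω + (T5 ω + (T6 ω + (T7 ω + (T8 ω + T9 ω))))))) μ :=
      i2.add a4
    rw [integral_add i1 a3, integral_add i2 a4, integral_add i3 a5, integral_add i4 a6,
      integral_add i5 a7, integral_add i6 a8, integral_add i7 a9, integral_add i8 i9]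
    simp only [hT1, hT2, hT3, hT4, hT5, hT6, hT7, hT8, hT9]
    -- measurable pieces on the codomain of `Y`
    have hGgm : Measurable (fun y : ℂ × ((Fin N → ℂ) × ((Fin N → ℂ) × (ℂ × ℂ))) =>
        star y.2.2.1 ⬝ᵥ y.2.1) := by
      simp only [dotProduct, Pi.star_apply]
      exact Finset.measurable_sum _ fun i _ =>
        ((mstar.comp ((measurable_pi_apply i).comp measurable_snd.snd.fst)).mul
          ((measurable_pi_apply i).comp measurable_snd.fst))
    have phase_fact : ∀ (f : ℝ × ℝ → ℂ) (G : ℂ × ((Fin N → ℂ) × ((Fin N → ℂ) × (ℂ × ℂ))) → ℂ),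
        Measurable f → Measurable G →
        ∫ ω, f (X ω) * G (Y ω) ∂μ = (∫ ω, f (X ω) ∂μ) * ∫ ω, G (Y ω) ∂μ :=
      fun f G hf hG => aux_indep_integral_mul hXm hYm hφrest hf hG
    have hfp : Measurable (fun x : ℝ × ℝ => Complex.exp (Complex.I * prp x)) :=
      (hexpm Complex.I).comp hprpm
    have hfq : Measurable (fun x : ℝ × ℝ => Complex.exp (-Complex.I * prq x)) :=
      (hexpm (-Complex.I)).comp hprqm
    have hEp : ∫ ω, Complex.exp (Complex.I * prp (X ω)) ∂μ = 0 := by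
      rw [integral_congr_ae (Filter.Eventually.of_forall fun ω =>
        by beta_reduce; rw [hp ω] : (fun ω => Complex.exp (Complex.I * prp (X ω)))
          =ᵐ[μ] fun ω => Complex.exp (Complex.I * φ p ω))]
      exact Ephase _ (Or.inl rfl) p
    have hEq : ∫ ω, Complex.exp (-Complex.I * prq (X ω)) ∂μ = 0 := by
      rw [integral_congr_ae (Filter.Eventually.of_forall fun ω =>
        by beta_reduce; rw [hq ω] : (fun ω => Complex.exp (-Complex.I * prq (X ω)))
          =ᵐ[μ] fun ω => Complex.exp (-Complex.I * φ q ω))]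
      exact Ephase _ (Or.inr rfl) q
    -- the coordinate of `n q` / `n p` inside the tuple
    have hsel : ∀ (l : Fin 2) (ω : Ω),
        (if l = 0 then (Y ω).2.2.2.1 else (Y ω).2.2.2.2) = n l ω := by
      intro l ω
      by_cases hl : l = 0
      · simp [hl, hYdef]
      · rw [Fin.eq_one_of_ne_zero l hl]; simp [hYdef]
    have hselm : ∀ l : Fin 2, Measurable (fun y : ℂ × ((Fin N → ℂ) × ((Fin N → ℂ) × (ℂ × ℂ))) =>
        if l = 0 then y.2.2.2.1 else y.2.2.2.2) := by
      intro l
      by_cases hl : l = 0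
      · simp only [hl, if_true]; exact measurable_snd.snd.snd.fst
      · simp only [hl, if_false]; exact measurable_snd.snd.snd.snd
    -- T2
    have e2 : ∫ ω, Complex.exp (-Complex.I * φ q ω) * (h ω * star (g ω)) ∂μ = 0 := by
      have h1 : ∫ ω, Complex.exp (-Complex.I * φ q ω) * (h ω * star (g ω)) ∂μ
          = ∫ ω, Complex.exp (-Complex.I * prq (X ω))
            * ((Y ω).1 * star (star (Y ω).2.2.1 ⬝ᵥ (Y ω).2.1)) ∂μ :=
        integral_congr_ae (Filter.Eventually.of_forall fun ω => by beta_reduce; rw [hq ω])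
      have h2 := phase_fact (fun x => Complex.exp (-Complex.I * prq x))
        (fun y => y.1 * star (star y.2.2.1 ⬝ᵥ y.2.1)) hfq (measurable_fst.mul (mstar.comp hGgm))
      beta_reduce at h2
      rw [h1, h2, hEq, zero_mul]
    -- T3
    have e3 : ∫ ω, h ω * star (n q ω) ∂μ = 0 := by
      have h2 := aux_indep_integral_mul hhm (hnm q) (Ihn q)
        (f := fun z : ℂ => z) (g := fun z : ℂ => star z) measurable_id mstar
      beta_reduce at h2
      rw [h2, hhmean, zero_mul]
    -- T4
    have e4 : ∫ ω, Complex.exp (Complex.I * φ p ω) * (g ω * star (h ω)) ∂μ = 0 := by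
      have h1 : ∫ ω, Complex.exp (Complex.I * φ p ω) * (g ω * star (h ω)) ∂μ
          = ∫ ω, Complex.exp (Complex.I * prp (X ω))
            * ((star (Y ω).2.2.1 ⬝ᵥ (Y ω).2.1) * star (Y ω).1) ∂μ :=
        integral_congr_ae (Filter.Eventually.of_forall fun ω => by beta_reduce; rw [hp ω])
      have h2 := phase_fact (fun x => Complex.exp (Complex.I * prp x))
        (fun y => (star y.2.2.1 ⬝ᵥ y.2.1) * star y.1) hfp (hGgm.mul (mstar.comp measurable_fst))
      beta_reduce at h2
      rw [h1, h2, hEp, zero_mul]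
    -- T5
    have e5 : ∫ ω, (Complex.exp (Complex.I * φ p ω) * Complex.exp (-Complex.I * φ q ω))
          * (g ω * star (g ω)) ∂μ
        = (∫ ω, Complex.exp (Complex.I * φ p ω) * Complex.exp (-Complex.I * φ q ω) ∂μ)
          * (Rv * Ru).trace := by
      have h1 : ∫ ω, (Complex.exp (Complex.I * φ p ω) * Complex.exp (-Complex.I * φ q ω))
            * (g ω * star (g ω)) ∂μ
          = ∫ ω, (Complex.exp (Complex.I * prp (X ω)) * Complex.exp (-Complex.I * prq (X ω)))
            * ((star (Y ω).2.2.1 ⬝ᵥ (Y ω).2.1) * star (star (Y ω).2.2.1 ⬝ᵥ (Y ω).2.1)) ∂μ :=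
        integral_congr_ae (Filter.Eventually.of_forall fun ω => by beta_reduce; rw [hp ω, hq ω])
      have h2 := phase_fact (fun x =>
          Complex.exp (Complex.I * prp x) * Complex.exp (-Complex.I * prq x))
        (fun y => (star y.2.2.1 ⬝ᵥ y.2.1) * star (star y.2.2.1 ⬝ᵥ y.2.1))
        (hfp.mul hfq) (hGgm.mul (mstar.comp hGgm))
      beta_reduce at h2
      have e5a : ∫ ω, Complex.exp (Complex.I * prp (X ω))
            * Complex.exp (-Complex.I * prq (X ω)) ∂μ
          = ∫ ω, Complex.exp (Complex.I * φ p ω) * Complex.exp (-Complex.I * φ q ω) ∂μ :=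
        integral_congr_ae (Filter.Eventually.of_forall fun ω => by beta_reduce; rw [hp ω, hq ω])
      have e5b : ∫ ω, (star (Y ω).2.2.1 ⬝ᵥ (Y ω).2.1)
          * star (star (Y ω).2.2.1 ⬝ᵥ (Y ω).2.1) ∂μ = (Rv * Ru).trace := Egg
      rw [h1, h2, e5a, e5b]
    -- T6
    have e6 : ∫ ω, Complex.exp (Complex.I * φ p ω) * (g ω * star (n q ω)) ∂μ = 0 := by
      have h1 : ∫ ω, Complex.exp (Complex.I * φ p ω) * (g ω * star (n q ω)) ∂μ
          = ∫ ω, Complex.exp (Complex.I * prp (X ω))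
            * ((star (Y ω).2.2.1 ⬝ᵥ (Y ω).2.1)
              * star (if q = 0 then (Y ω).2.2.2.1 else (Y ω).2.2.2.2)) ∂μ :=
        integral_congr_ae (Filter.Eventually.of_forall fun ω => by beta_reduce; rw [hp ω, hsel q ω])
      have h2 := phase_fact (fun x => Complex.exp (Complex.I * prp x))
        (fun y => (star y.2.2.1 ⬝ᵥ y.2.1) * star (if q = 0 then y.2.2.2.1 else y.2.2.2.2))
        hfp (hGgm.mul (mstar.comp (hselm q)))
      beta_reduce at h2
      rw [h1, h2, hEp, zero_mul]
    -- T7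
    have e7 : ∫ ω, n p ω * star (h ω) ∂μ = 0 := by
      have h2 := aux_indep_integral_mul (hnm p) hhm (Ihn p).symm
        (f := fun z : ℂ => z) (g := fun z : ℂ => star z) measurable_id mstar
      beta_reduce at h2
      rw [h2, hnmean p, zero_mul]
    -- T8
    have e8 : ∫ ω, Complex.exp (-Complex.I * φ q ω) * (n p ω * star (g ω)) ∂μ = 0 := by
      have h1 : ∫ ω, Complex.exp (-Complex.I * φ q ω) * (n p ω * star (g ω)) ∂μ
          = ∫ ω, Complex.exp (-Complex.I * prq (X ω))
            * ((if p = 0 then (Y ω).2.2.2.1 else (Y ω).2.2.2.2)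
              * star (star (Y ω).2.2.1 ⬝ᵥ (Y ω).2.1)) ∂μ :=
        integral_congr_ae (Filter.Eventually.of_forall fun ω => by beta_reduce; rw [hq ω, hsel p ω])
      have h2 := phase_fact (fun x => Complex.exp (-Complex.I * prq x))
        (fun y => (if p = 0 then y.2.2.2.1 else y.2.2.2.2) * star (star y.2.2.1 ⬝ᵥ y.2.1))
        hfq ((hselm p).mul (mstar.comp hGgm))
      beta_reduce at h2
      rw [h1, h2, hEq, zero_mul]
    rw [hβ, e2, e3, e4, e5, e6, e7, e8]
    ring
  -- conclusion
  have hcross : ∫ ω, s 0 ω * star (s 1 ω) ∂μ = (β : ℂ) := by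
    have hm := main 0 1 Prod.fst Prod.snd measurable_fst measurable_snd
      (fun ω => rfl) (fun ω => rfl)
    have hphase : ∫ ω, Complex.exp (Complex.I * φ 0 ω)
        * Complex.exp (-Complex.I * φ 1 ω) ∂μ = 0 := by
      have h2 := aux_indep_integral_mul (hφm 0) (hφm 1) hφindep
        (f := fun x : ℝ => Complex.exp (Complex.I * x))
        (g := fun x : ℝ => Complex.exp (-Complex.I * x))
        (hexpm _) (hexpm _)
      beta_reduce at h2
      rw [h2, Ephase _ (Or.inl rfl) 0, zero_mul]
    rw [hm, hphase, hnuncorr, zero_mul, add_zero, add_zero]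
  have hone : ∀ l : Fin 2, ∫ ω, Complex.exp (Complex.I * φ l ω)
      * Complex.exp (-Complex.I * φ l ω) ∂μ = 1 := by
    intro l
    have hpt : ∀ ω, Complex.exp (Complex.I * φ l ω) * Complex.exp (-Complex.I * φ l ω)
        = (1 : ℂ) := by
      intro ω
      rw [← Complex.exp_add,
        show Complex.I * (φ l ω : ℂ) + -Complex.I * (φ l ω : ℂ) = 0 by ring,
        Complex.exp_zero]
    rw [integral_congr_ae (Filter.Eventually.of_forall hpt)]
    simp
  have hvar : ∀ l : Fin 2, ∫ ω, s l ω * star (s l ω) ∂μ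
      = (β : ℂ) + (Rv * Ru).trace + (σ2 : ℂ) := by
    intro l
    by_cases hl : l = 0
    · rw [hl, main 0 0 Prod.fst Prod.fst measurable_fst measurable_fst
        (fun ω => rfl) (fun ω => rfl), hone 0, one_mul, hσ 0]
    · rw [Fin.eq_one_of_ne_zero l hl,
        main 1 1 Prod.snd Prod.snd measurable_snd measurable_snd
          (fun ω => rfl) (fun ω => rfl), hone 1, one_mul, hσ 1]
  exact ⟨hcross, hvar, fun l => by rw [hcross, hvar l]⟩
end

section
/- Cross-correlation and variance after direct-path subtraction (Theorem 2). Consider samples t_p(ω) = star (v ω) ⬝ᵥ ((Φ_p ω).mulVec (u ω)) + ẑ_p(ω), p ∈ {1,2}, where ẑ_p = n_p − n_d and n_d : Ω → ℂ is the (shared) direct-probing estimation noise. Assume the family (u, v, Φ₁, Φ₂, n₁, n₂, n_d) is mutually independent, everything (entrywise) zero-mean and square-integrable, E[|n₁|²] = E[|n₂|²] = σ², E[n₁ · conj(n₂)] = 0, and E[|n_d|²] = σ_d². Then: (i) E[t₁ · conj(t₂)] = trace(R_u · (E[Φ₂])ᴴ · R_v · E[Φ₁]) + σ_d²; and (ii)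 for l ∈ {1,2}, E[|t_l|²] = E[trace(R_u · (Φ_l)ᴴ · R_v · Φ_l)] + σ_d² + σ². Consequently the correlation coefficient ρ = E[t₁ · conj(t₂)] / E[|t_l|²] equals (trace(R_u · (E[Φ₂])ᴴ · R_v · E[Φ₁]) + σ_d²) / (E[trace(R_u · (Φ_l)ᴴ · R_v · Φ_l)] + σ_d² + σ²). -/
open MeasureTheory ProbabilityTheory Matrix Complex

theorem aux_mulL2 {Ω : Type*} [MeasurableSpace Ω] {μ : Measure Ω}
    {f g : Ω → ℂ} (hf : MemLp f 2 μ) (hg : MemLp g 2 μ) :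
    Integrable (fun ω => f ω * g ω) μ := by
  have h := hg.smul hf (r := 1) (hpqr := ⟨by simp [ENNReal.inv_two_add_inv_two]⟩)
  rw [← memLp_one_iff_integrable]
  exact h

theorem aux_starL2 {Ω : Type*} [MeasurableSpace Ω] {μ : Measure Ω}
    {f : Ω → ℂ} (hf : MemLp f 2 μ) : MemLp (fun ω => star (f ω)) 2 μ := by
  refine MemLp.of_le hf (continuous_star.comp_aestronglyMeasurable hf.aestronglyMeasurable) ?_
  filter_upwards with ω
  simp

theorem aux_bdd {Ω : Type*} [MeasurableSpace Ω] {μ : Measure Ω} [IsProbabilityMeasure μ]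
    {f : Ω → ℂ} (hm : Measurable f) (C : ℝ) (hb : ∀ ω, ‖f ω‖ ≤ C) :
    Integrable f μ := by
  refine MemLp.integrable le_rfl (MemLp.of_bound hm.aestronglyMeasurable C ?_)
  filter_upwards with ω
  simpa using hb ω

theorem aux_fact7 {α1 α2 α3 α4 α5 α6 α7 : Type*}
    [MeasurableSpace α1] [MeasurableSpace α2] [MeasurableSpace α3] [MeasurableSpace α4]
    [MeasurableSpace α5] [MeasurableSpace α6] [MeasurableSpace α7]
    (ν1 : Measure α1) (ν2 : Measure α2) (ν3 : Measure α3) (ν4 : Measure α4)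
    (ν5 : Measure α5) (ν6 : Measure α6) (ν7 : Measure α7)
    [SFinite ν1] [SFinite ν2] [SFinite ν3] [SFinite ν4] [SFinite ν5] [SFinite ν6] [SFinite ν7]
    (f1 : α1 → ℂ) (f2 : α2 → ℂ) (f3 : α3 → ℂ) (f4 : α4 → ℂ)
    (f5 : α5 → ℂ) (f6 : α6 → ℂ) (f7 : α7 → ℂ) :
    ∫ x, f1 x.1 * (f2 x.2.1 * (f3 x.2.2.1 * (f4 x.2.2.2.1 * (f5 x.2.2.2.2.1 *
        (f6 x.2.2.2.2.2.1 * f7 x.2.2.2.2.2.2)))))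
      ∂(ν1.prod (ν2.prod (ν3.prod (ν4.prod (ν5.prod (ν6.prod ν7)))))) =
    (∫ x, f1 x ∂ν1) * ((∫ x, f2 x ∂ν2) * ((∫ x, f3 x ∂ν3) * ((∫ x, f4 x ∂ν4) *
      ((∫ x, f5 x ∂ν5) * ((∫ x, f6 x ∂ν6) * (∫ x, f7 x ∂ν7)))))) := by
  calc ∫ x, f1 x.1 * (f2 x.2.1 * (f3 x.2.2.1 * (f4 x.2.2.2.1 * (f5 x.2.2.2.2.1 *
        (f6 x.2.2.2.2.2.1 * f7 x.2.2.2.2.2.2)))))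
      ∂(ν1.prod (ν2.prod (ν3.prod (ν4.prod (ν5.prod (ν6.prod ν7))))))
      = (∫ x, f1 x ∂ν1) * ∫ y, f2 y.1 * (f3 y.2.1 * (f4 y.2.2.1 * (f5 y.2.2.2.1 *
          (f6 y.2.2.2.2.1 * f7 y.2.2.2.2.2)))) ∂(ν2.prod (ν3.prod (ν4.prod (ν5.prod (ν6.prod ν7))))) := by
        exact integral_prod_mul f1 (fun y : α2 × α3 × α4 × α5 × α6 × α7 => f2 y.1 * (f3 y.2.1 * (f4 y.2.2.1 * (f5 y.2.2.2.1 *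
          (f6 y.2.2.2.2.1 * f7 y.2.2.2.2.2)))))
    _ = (∫ x, f1 x ∂ν1) * ((∫ x, f2 x ∂ν2) * ∫ y, f3 y.1 * (f4 y.2.1 * (f5 y.2.2.1 *
          (f6 y.2.2.2.1 * f7 y.2.2.2.2))) ∂(ν3.prod (ν4.prod (ν5.prod (ν6.prod ν7))))) := by
        exact congrArg (fun w => (∫ x, f1 x ∂ν1) * w)
          (integral_prod_mul f2 (fun y : α3 × α4 × α5 × α6 × α7 => f3 y.1 * (f4 y.2.1 * (f5 y.2.2.1 *
            (f6 y.2.2.2.1 * f7 y.2.2.2.2)))))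
    _ = (∫ x, f1 x ∂ν1) * ((∫ x, f2 x ∂ν2) * ((∫ x, f3 x ∂ν3) * ∫ y, f4 y.1 * (f5 y.2.1 *
          (f6 y.2.2.1 * f7 y.2.2.2)) ∂(ν4.prod (ν5.prod (ν6.prod ν7))))) := by
        exact congrArg (fun w => (∫ x, f1 x ∂ν1) * ((∫ x, f2 x ∂ν2) * w))
          (integral_prod_mul f3 (fun y : α4 × α5 × α6 × α7 => f4 y.1 * (f5 y.2.1 * (f6 y.2.2.1 * f7 y.2.2.2))))
    _ = (∫ x, f1 x ∂ν1) * ((∫ x, f2 x ∂ν2) * ((∫ x, f3 x ∂ν3) * ((∫ x, f4 x ∂ν4) *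
          ∫ y, f5 y.1 * (f6 y.2.1 * f7 y.2.2) ∂(ν5.prod (ν6.prod ν7))))) := by
        exact congrArg (fun w => (∫ x, f1 x ∂ν1) * ((∫ x, f2 x ∂ν2) * ((∫ x, f3 x ∂ν3) * w)))
          (integral_prod_mul f4 (fun y : α5 × α6 × α7 => f5 y.1 * (f6 y.2.1 * f7 y.2.2)))
    _ = (∫ x, f1 x ∂ν1) * ((∫ x, f2 x ∂ν2) * ((∫ x, f3 x ∂ν3) * ((∫ x, f4 x ∂ν4) *
          ((∫ x, f5 x ∂ν5) * ∫ y, f6 y.1 * f7 y.2 ∂(ν6.prod ν7))))) := by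
        exact congrArg (fun w => (∫ x, f1 x ∂ν1) * ((∫ x, f2 x ∂ν2) * ((∫ x, f3 x ∂ν3) *
          ((∫ x, f4 x ∂ν4) * w)))) (integral_prod_mul f5 (fun y : α6 × α7 => f6 y.1 * f7 y.2))
    _ = (∫ x, f1 x ∂ν1) * ((∫ x, f2 x ∂ν2) * ((∫ x, f3 x ∂ν3) * ((∫ x, f4 x ∂ν4) *
          ((∫ x, f5 x ∂ν5) * ((∫ x, f6 x ∂ν6) * (∫ x, f7 x ∂ν7)))))) := by
        exact congrArg (fun w => (∫ x, f1 x ∂ν1) * ((∫ x, f2 x ∂ν2) * ((∫ x, f3 x ∂ν3) *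
          ((∫ x, f4 x ∂ν4) * ((∫ x, f5 x ∂ν5) * w))))) (integral_prod_mul f6 f7)

theorem aux_int7 {α1 α2 α3 α4 α5 α6 α7 : Type*}
    [MeasurableSpace α1] [MeasurableSpace α2] [MeasurableSpace α3] [MeasurableSpace α4]
    [MeasurableSpace α5] [MeasurableSpace α6] [MeasurableSpace α7]
    {ν1 : Measure α1} {ν2 : Measure α2} {ν3 : Measure α3} {ν4 : Measure α4}
    {ν5 : Measure α5} {ν6 : Measure α6} {ν7 : Measure α7}
    [SFinite ν1] [SFinite ν2] [SFinite ν3] [SFinite ν4] [SFinite ν5] [SFinite ν6] [SFinite ν7]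
    {f1 : α1 → ℂ} {f2 : α2 → ℂ} {f3 : α3 → ℂ} {f4 : α4 → ℂ}
    {f5 : α5 → ℂ} {f6 : α6 → ℂ} {f7 : α7 → ℂ}
    (h1 : Integrable f1 ν1) (h2 : Integrable f2 ν2) (h3 : Integrable f3 ν3)
    (h4 : Integrable f4 ν4) (h5 : Integrable f5 ν5) (h6 : Integrable f6 ν6)
    (h7 : Integrable f7 ν7) :
    Integrable (fun x => f1 x.1 * (f2 x.2.1 * (f3 x.2.2.1 * (f4 x.2.2.2.1 * (f5 x.2.2.2.2.1 *
        (f6 x.2.2.2.2.2.1 * f7 x.2.2.2.2.2.2))))))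
      (ν1.prod (ν2.prod (ν3.prod (ν4.prod (ν5.prod (ν6.prod ν7)))))) :=
  h1.mul_prod (h2.mul_prod (h3.mul_prod (h4.mul_prod (h5.mul_prod (h6.mul_prod h7)))))

section E7
variable {Ω : Type*} [MeasurableSpace Ω] {μ : Measure Ω} [IsProbabilityMeasure μ]
    {α1 α2 α3 α4 α5 α6 α7 : Type*}
    [MeasurableSpace α1] [MeasurableSpace α2] [MeasurableSpace α3] [MeasurableSpace α4]
    [MeasurableSpace α5] [MeasurableSpace α6] [MeasurableSpace α7]
    {g1 : Ω → α1} {g2 : Ω → α2} {g3 : Ω → α3} {g4 : Ω → α4} {g5 : Ω → α5} {g6 : Ω → α6}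
    {g7 : Ω → α7}

theorem aux_E7
    (hg1 : Measurable g1) (hg2 : Measurable g2) (hg3 : Measurable g3) (hg4 : Measurable g4)
    (hg5 : Measurable g5) (hg6 : Measurable g6) (hg7 : Measurable g7)
    (hindep : μ.map (fun ω => (g1 ω, g2 ω, g3 ω, g4 ω, g5 ω, g6 ω, g7 ω)) =
      (μ.map g1).prod ((μ.map g2).prod ((μ.map g3).prod ((μ.map g4).prod
        ((μ.map g5).prod ((μ.map g6).prod (μ.map g7)))))))
    {f1 : α1 → ℂ} {f2 : α2 → ℂ} {f3 : α3 → ℂ} {f4 : α4 → ℂ} {f5 : α5 → ℂ}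
    {f6 : α6 → ℂ} {f7 : α7 → ℂ}
    (hf1 : Measurable f1) (hf2 : Measurable f2) (hf3 : Measurable f3) (hf4 : Measurable f4)
    (hf5 : Measurable f5) (hf6 : Measurable f6) (hf7 : Measurable f7) :
    ∫ ω, f1 (g1 ω) * (f2 (g2 ω) * (f3 (g3 ω) * (f4 (g4 ω) * (f5 (g5 ω) *
        (f6 (g6 ω) * f7 (g7 ω)))))) ∂μ =
      (∫ ω, f1 (g1 ω) ∂μ) * ((∫ ω, f2 (g2 ω) ∂μ) * ((∫ ω, f3 (g3 ω) ∂μ) *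
        ((∫ ω, f4 (g4 ω) ∂μ) * ((∫ ω, f5 (g5 ω) ∂μ) * ((∫ ω, f6 (g6 ω) ∂μ) *
          (∫ ω, f7 (g7 ω) ∂μ)))))) := by
  haveI i1 := Measure.isProbabilityMeasure_map (μ := μ) hg1.aemeasurable
  haveI i2 := Measure.isProbabilityMeasure_map (μ := μ) hg2.aemeasurable
  haveI i3 := Measure.isProbabilityMeasure_map (μ := μ) hg3.aemeasurable
  haveI i4 := Measure.isProbabilityMeasure_map (μ := μ) hg4.aemeasurable
  haveI i5 := Measure.isProbabilityMeasure_map (μ := μ) hg5.aemeasurable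
  haveI i6 := Measure.isProbabilityMeasure_map (μ := μ) hg6.aemeasurable
  haveI i7 := Measure.isProbabilityMeasure_map (μ := μ) hg7.aemeasurable
  have hT : Measurable (fun ω => (g1 ω, g2 ω, g3 ω, g4 ω, g5 ω, g6 ω, g7 ω)) :=
    hg1.prodMk (hg2.prodMk (hg3.prodMk (hg4.prodMk (hg5.prodMk (hg6.prodMk hg7)))))
  have hF : Measurable (fun x : α1 × α2 × α3 × α4 × α5 × α6 × α7 =>
      f1 x.1 * (f2 x.2.1 * (f3 x.2.2.1 * (f4 x.2.2.2.1 * (f5 x.2.2.2.2.1 *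
        (f6 x.2.2.2.2.2.1 * f7 x.2.2.2.2.2.2)))))) := by
    fun_prop
  calc ∫ ω, f1 (g1 ω) * (f2 (g2 ω) * (f3 (g3 ω) * (f4 (g4 ω) * (f5 (g5 ω) *
        (f6 (g6 ω) * f7 (g7 ω)))))) ∂μ
      = ∫ x, f1 x.1 * (f2 x.2.1 * (f3 x.2.2.1 * (f4 x.2.2.2.1 * (f5 x.2.2.2.2.1 *
          (f6 x.2.2.2.2.2.1 * f7 x.2.2.2.2.2.2)))))
          ∂(μ.map (fun ω => (g1 ω, g2 ω, g3 ω, g4 ω, g5 ω, g6 ω, g7 ω))) := by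
        exact (integral_map hT.aemeasurable hF.aestronglyMeasurable).symm
    _ = ∫ x, f1 x.1 * (f2 x.2.1 * (f3 x.2.2.1 * (f4 x.2.2.2.1 * (f5 x.2.2.2.2.1 *
          (f6 x.2.2.2.2.2.1 * f7 x.2.2.2.2.2.2)))))
          ∂((μ.map g1).prod ((μ.map g2).prod ((μ.map g3).prod ((μ.map g4).prod
            ((μ.map g5).prod ((μ.map g6).prod (μ.map g7))))))) := by rw [hindep]
    _ = (∫ x, f1 x ∂(μ.map g1)) * ((∫ x, f2 x ∂(μ.map g2)) * ((∫ x, f3 x ∂(μ.map g3)) *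
          ((∫ x, f4 x ∂(μ.map g4)) * ((∫ x, f5 x ∂(μ.map g5)) * ((∫ x, f6 x ∂(μ.map g6)) *
            (∫ x, f7 x ∂(μ.map g7))))))) :=
        aux_fact7 _ _ _ _ _ _ _ f1 f2 f3 f4 f5 f6 f7
    _ = _ := by
        rw [integral_map hg1.aemeasurable hf1.aestronglyMeasurable,
          integral_map hg2.aemeasurable hf2.aestronglyMeasurable,
          integral_map hg3.aemeasurable hf3.aestronglyMeasurable,
          integral_map hg4.aemeasurable hf4.aestronglyMeasurable,
          integral_map hg5.aemeasurable hf5.aestronglyMeasurable,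
          integral_map hg6.aemeasurable hf6.aestronglyMeasurable,
          integral_map hg7.aemeasurable hf7.aestronglyMeasurable]

theorem aux_I7
    (hg1 : Measurable g1) (hg2 : Measurable g2) (hg3 : Measurable g3) (hg4 : Measurable g4)
    (hg5 : Measurable g5) (hg6 : Measurable g6) (hg7 : Measurable g7)
    (hindep : μ.map (fun ω => (g1 ω, g2 ω, g3 ω, g4 ω, g5 ω, g6 ω, g7 ω)) =
      (μ.map g1).prod ((μ.map g2).prod ((μ.map g3).prod ((μ.map g4).prod
        ((μ.map g5).prod ((μ.map g6).prod (μ.map g7)))))))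
    {f1 : α1 → ℂ} {f2 : α2 → ℂ} {f3 : α3 → ℂ} {f4 : α4 → ℂ} {f5 : α5 → ℂ}
    {f6 : α6 → ℂ} {f7 : α7 → ℂ}
    (hf1 : Measurable f1) (hf2 : Measurable f2) (hf3 : Measurable f3) (hf4 : Measurable f4)
    (hf5 : Measurable f5) (hf6 : Measurable f6) (hf7 : Measurable f7)
    (h1 : Integrable (fun ω => f1 (g1 ω)) μ) (h2 : Integrable (fun ω => f2 (g2 ω)) μ)
    (h3 : Integrable (fun ω => f3 (g3 ω)) μ) (h4 : Integrable (fun ω => f4 (g4 ω)) μ)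
    (h5 : Integrable (fun ω => f5 (g5 ω)) μ) (h6 : Integrable (fun ω => f6 (g6 ω)) μ)
    (h7 : Integrable (fun ω => f7 (g7 ω)) μ) :
    Integrable (fun ω => f1 (g1 ω) * (f2 (g2 ω) * (f3 (g3 ω) * (f4 (g4 ω) * (f5 (g5 ω) *
        (f6 (g6 ω) * f7 (g7 ω))))))) μ := by
  haveI i1 := Measure.isProbabilityMeasure_map (μ := μ) hg1.aemeasurable
  haveI i2 := Measure.isProbabilityMeasure_map (μ := μ) hg2.aemeasurable
  haveI i3 := Measure.isProbabilityMeasure_map (μ := μ) hg3.aemeasurable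
  haveI i4 := Measure.isProbabilityMeasure_map (μ := μ) hg4.aemeasurable
  haveI i5 := Measure.isProbabilityMeasure_map (μ := μ) hg5.aemeasurable
  haveI i6 := Measure.isProbabilityMeasure_map (μ := μ) hg6.aemeasurable
  haveI i7 := Measure.isProbabilityMeasure_map (μ := μ) hg7.aemeasurable
  have hT : Measurable (fun ω => (g1 ω, g2 ω, g3 ω, g4 ω, g5 ω, g6 ω, g7 ω)) :=
    hg1.prodMk (hg2.prodMk (hg3.prodMk (hg4.prodMk (hg5.prodMk (hg6.prodMk hg7)))))
  have hF : Measurable (fun x : α1 × α2 × α3 × α4 × α5 × α6 × α7 =>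
      f1 x.1 * (f2 x.2.1 * (f3 x.2.2.1 * (f4 x.2.2.2.1 * (f5 x.2.2.2.2.1 *
        (f6 x.2.2.2.2.2.1 * f7 x.2.2.2.2.2.2)))))) := by fun_prop
  have h1' : Integrable f1 (μ.map g1) :=
    (integrable_map_measure hf1.aestronglyMeasurable hg1.aemeasurable).mpr h1
  have h2' : Integrable f2 (μ.map g2) :=
    (integrable_map_measure hf2.aestronglyMeasurable hg2.aemeasurable).mpr h2
  have h3' : Integrable f3 (μ.map g3) :=
    (integrable_map_measure hf3.aestronglyMeasurable hg3.aemeasurable).mpr h3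
  have h4' : Integrable f4 (μ.map g4) :=
    (integrable_map_measure hf4.aestronglyMeasurable hg4.aemeasurable).mpr h4
  have h5' : Integrable f5 (μ.map g5) :=
    (integrable_map_measure hf5.aestronglyMeasurable hg5.aemeasurable).mpr h5
  have h6' : Integrable f6 (μ.map g6) :=
    (integrable_map_measure hf6.aestronglyMeasurable hg6.aemeasurable).mpr h6
  have h7' : Integrable f7 (μ.map g7) :=
    (integrable_map_measure hf7.aestronglyMeasurable hg7.aemeasurable).mpr h7
  have hP : Integrable (fun x : α1 × α2 × α3 × α4 × α5 × α6 × α7 =>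
      f1 x.1 * (f2 x.2.1 * (f3 x.2.2.1 * (f4 x.2.2.2.1 * (f5 x.2.2.2.2.1 *
        (f6 x.2.2.2.2.2.1 * f7 x.2.2.2.2.2.2))))))
      (μ.map (fun ω => (g1 ω, g2 ω, g3 ω, g4 ω, g5 ω, g6 ω, g7 ω))) := by
    rw [hindep]
    exact aux_int7 h1' h2' h3' h4' h5' h6' h7'
  exact (integrable_map_measure hF.aestronglyMeasurable hT.aemeasurable).mp hP

end E7

theorem aux_traceQuad {N : ℕ} (Ru Rv A B : Matrix (Fin N) (Fin N) ℂ) :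
    ∑ q : (Fin N × Fin N) × Fin N × Fin N,
        Ru q.1.2 q.2.2 * (Rv q.2.1 q.1.1 * (A q.1.1 q.1.2 * star (B q.2.1 q.2.2)))
      = (Ru * Bᴴ * Rv * A).trace := by
  simp only [Fintype.sum_prod_type, Matrix.trace, Matrix.diag_apply, Matrix.mul_apply,
    Matrix.conjTranspose_apply, Finset.sum_mul, Finset.mul_sum]
  rw [Finset.sum_comm]
  refine Finset.sum_congr rfl fun j _ => Finset.sum_congr rfl fun i _ => ?_
  refine Finset.sum_congr rfl fun k _ => Finset.sum_congr rfl fun l _ => by ring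

/-- **Theorem 2** (cross-correlation and variance of IRS-assisted channel samples
after direct-path subtraction).  The samples are
`t p ω = (v ω)ᴴ ⬝ (Φ p ω) ⬝ (u ω) + (n p ω - n_d ω)`, where `n_d` is the shared
direct-probing estimation noise. -/
theorem crossCorrelation_variance_IRS_samples_direct_subtracted
    {Ω : Type*} [MeasurableSpace Ω] (μ : Measure Ω) [IsProbabilityMeasure μ]
    {N : ℕ} (hN : 1 ≤ N)
    (u v : Ω → Fin N → ℂ)
    (Φ : Fin 2 → Ω → Matrix (Fin N) (Fin N) ℂ)
    (n : Fin 2 → Ω → ℂ) (nd : Ω → ℂ)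
    (t : Fin 2 → Ω → ℂ)
    (ht : ∀ p ω, t p ω = star (v ω) ⬝ᵥ ((Φ p ω).mulVec (u ω)) + (n p ω - nd ω))
    -- measurability
    (hum : Measurable u) (hvm : Measurable v)
    (hΦm : ∀ p, Measurable (Φ p)) (hnm : ∀ p, Measurable (n p)) (hndm : Measurable nd)
    -- each `Φ p ω` is diagonal with unit-modulus diagonal entries
    (hΦdiag : ∀ p ω, ∀ i j : Fin N, i ≠ j → Φ p ω i j = 0)
    (hΦunit : ∀ p ω, ∀ i : Fin N, ‖Φ p ω i i‖ = 1)
    -- square integrability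
    (hnL2 : ∀ p, MemLp (n p) 2 μ) (hndL2 : MemLp nd 2 μ)
    (huL2 : ∀ i, MemLp (fun ω => u ω i) 2 μ)
    (hvL2 : ∀ i, MemLp (fun ω => v ω i) 2 μ)
    -- zero means
    (hnmean : ∀ p, ∫ ω, n p ω ∂μ = 0)
    (hndmean : ∫ ω, nd ω ∂μ = 0)
    (humean : ∀ i, ∫ ω, u ω i ∂μ = 0)
    (hvmean : ∀ i, ∫ ω, v ω i ∂μ = 0)
    -- second moments of the noises
    (σ2 σd2 : ℝ)
    (hσ : ∀ p, ∫ ω, n p ω * star (n p ω) ∂μ = (σ2 : ℂ))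
    (hnuncorr : ∫ ω, n 0 ω * star (n 1 ω) ∂μ = 0)
    (hσd : ∫ ω, nd ω * star (nd ω) ∂μ = (σd2 : ℂ))
    -- covariance matrices of the IRS channel vectors
    (Ru Rv : Matrix (Fin N) (Fin N) ℂ)
    (hRu : ∀ i j, Ru i j = ∫ ω, u ω i * star (u ω j) ∂μ)
    (hRv : ∀ i j, Rv i j = ∫ ω, v ω i * star (v ω j) ∂μ)
    -- entrywise expectations of the phase-shift matrices
    (EΦ : Fin 2 → Matrix (Fin N) (Fin N) ℂ)
    (hEΦ : ∀ p i j, EΦ p i j = ∫ ω, Φ p ω i j ∂μ)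
    -- mutual independence of the family (u, v, Φ₁, Φ₂, n₁, n₂, n_d):
    -- the joint law is the product of the individual laws
    (hindep :
      μ.map (fun ω => (u ω, v ω, Φ 0 ω, Φ 1 ω, n 0 ω, n 1 ω, nd ω)) =
        (μ.map u).prod ((μ.map v).prod ((μ.map (Φ 0)).prod ((μ.map (Φ 1)).prod
          ((μ.map (n 0)).prod ((μ.map (n 1)).prod (μ.map nd))))))) :
    -- (i) cross-correlation
    (∫ ω, t 0 ω * star (t 1 ω) ∂μ
        = (Ru * (EΦ 1)ᴴ * Rv * EΦ 0).trace + (σd2 : ℂ)) ∧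
    -- (ii) variance of each sample
    (∀ l : Fin 2, ∫ ω, t l ω * star (t l ω) ∂μ
        = (∫ ω, (Ru * (Φ l ω)ᴴ * Rv * Φ l ω).trace ∂μ) + (σd2 : ℂ) + (σ2 : ℂ)) ∧
    -- consequence: the correlation coefficient
    (∀ l : Fin 2,
      (∫ ω, t 0 ω * star (t 1 ω) ∂μ) / (∫ ω, t l ω * star (t l ω) ∂μ)
        = ((Ru * (EΦ 1)ᴴ * Rv * EΦ 0).trace + (σd2 : ℂ))
          / ((∫ ω, (Ru * (Φ l ω)ᴴ * Rv * Φ l ω).trace ∂μ) + (σd2 : ℂ) + (σ2 : ℂ))) := by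
  classical
  -- measurability helpers
  have mstc : Measurable (fun z : ℂ => star z) := continuous_star.measurable
  have midc : Measurable (fun z : ℂ => z) := measurable_id
  have m1c : Measurable (fun _ : ℂ => (1 : ℂ)) := measurable_const
  have m1a : Measurable (fun _ : Fin N → ℂ => (1 : ℂ)) := measurable_const
  have m1m : Measurable (fun _ : Matrix (Fin N) (Fin N) ℂ => (1 : ℂ)) := measurable_const
  have mUc : ∀ j : Fin N, Measurable (fun x : Fin N → ℂ => x j) := fun j => measurable_pi_apply j
  have mUs : ∀ j : Fin N, Measurable (fun x : Fin N → ℂ => star (x j)) :=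
    fun j => mstc.comp (measurable_pi_apply j)
  have mUU : ∀ j l : Fin N, Measurable (fun x : Fin N → ℂ => x j * star (x l)) :=
    fun j l => (mUc j).mul (mUs l)
  have mVV : ∀ i k : Fin N, Measurable (fun x : Fin N → ℂ => star (x i) * x k) :=
    fun i k => (mUs i).mul (mUc k)
  have mM : ∀ i j : Fin N, Measurable (fun M : Matrix (Fin N) (Fin N) ℂ => M i j) :=
    fun i j => (measurable_pi_apply j).comp (measurable_pi_apply i)
  have mMs : ∀ i j : Fin N, Measurable (fun M : Matrix (Fin N) (Fin N) ℂ => star (M i j)) :=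
    fun i j => mstc.comp (mM i j)
  have mMM : ∀ i j k l : Fin N,
      Measurable (fun M : Matrix (Fin N) (Fin N) ℂ => M i j * star (M k l)) :=
    fun i j k l => (mM i j).mul (mMs k l)
  -- bound on the entries of Φ
  have hΦabs : ∀ p ω (i j : Fin N), ‖Φ p ω i j‖ ≤ 1 := by
    intro p ω i j
    by_cases h : i = j
    · subst h; rw [hΦunit p ω i]
    · rw [hΦdiag p ω i j h]; simp
  -- integrability helpers
  have I1 : Integrable (fun _ : Ω => (1 : ℂ)) μ := integrable_const 1
  have Iu1 : ∀ j, Integrable (fun ω => u ω j) μ := fun j => (huL2 j).integrable one_le_two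
  have Iu1s : ∀ j, Integrable (fun ω => star (u ω j)) μ :=
    fun j => (aux_starL2 (huL2 j)).integrable one_le_two
  have Iv1 : ∀ i, Integrable (fun ω => v ω i) μ := fun i => (hvL2 i).integrable one_le_two
  have Iv1s : ∀ i, Integrable (fun ω => star (v ω i)) μ :=
    fun i => (aux_starL2 (hvL2 i)).integrable one_le_two
  have In1 : ∀ p, Integrable (fun ω => n p ω) μ := fun p => (hnL2 p).integrable one_le_two
  have In1s : ∀ p, Integrable (fun ω => star (n p ω)) μ :=
    fun p => (aux_starL2 (hnL2 p)).integrable one_le_two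
  have Ind1 : Integrable (fun ω => nd ω) μ := hndL2.integrable one_le_two
  have Ind1s : Integrable (fun ω => star (nd ω)) μ :=
    (aux_starL2 hndL2).integrable one_le_two
  have Iuu : ∀ j l, Integrable (fun ω => u ω j * star (u ω l)) μ :=
    fun j l => aux_mulL2 (huL2 j) (aux_starL2 (huL2 l))
  have Ivv : ∀ i k, Integrable (fun ω => star (v ω i) * v ω k) μ :=
    fun i k => aux_mulL2 (aux_starL2 (hvL2 i)) (hvL2 k)
  have Inn : ∀ p q, Integrable (fun ω => n p ω * star (n q ω)) μ :=
    fun p q => aux_mulL2 (hnL2 p) (aux_starL2 (hnL2 q))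
  have Innd : ∀ p, Integrable (fun ω => n p ω * star (nd ω)) μ :=
    fun p => aux_mulL2 (hnL2 p) (aux_starL2 hndL2)
  have Indn : ∀ p, Integrable (fun ω => nd ω * star (n p ω)) μ :=
    fun p => aux_mulL2 hndL2 (aux_starL2 (hnL2 p))
  have Indnd : Integrable (fun ω => nd ω * star (nd ω)) μ :=
    aux_mulL2 hndL2 (aux_starL2 hndL2)
  have IΦ1 : ∀ p (i j : Fin N), Integrable (fun ω => Φ p ω i j) μ :=
    fun p i j => aux_bdd ((mM i j).comp (hΦm p)) 1 (fun ω => hΦabs p ω i j)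
  have IΦ1s : ∀ p (i j : Fin N), Integrable (fun ω => star (Φ p ω i j)) μ := by
    intro p i j
    refine aux_bdd ((mMs i j).comp (hΦm p)) 1 (fun ω => ?_)
    simpa using hΦabs p ω i j
  have IΦ2 : ∀ p (i j k l : Fin N),
      Integrable (fun ω => Φ p ω i j * star (Φ p ω k l)) μ := by
    intro p i j k l
    refine aux_bdd (((mM i j).comp (hΦm p)).mul ((mMs k l).comp (hΦm p))) 1 (fun ω => ?_)
    rw [norm_mul]
    calc ‖Φ p ω i j‖ * ‖star (Φ p ω k l)‖
        ≤ 1 * 1 := by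
          refine mul_le_mul (hΦabs p ω i j) ?_ (by positivity) zero_le_one
          simpa using hΦabs p ω k l
      _ = 1 := by norm_num
  -- expectation-of-product and integrability-of-product principles, from independence
  have EPC : ∀ {f1 f2 : (Fin N → ℂ) → ℂ} {f3 f4 : Matrix (Fin N) (Fin N) ℂ → ℂ}
      {f5 f6 f7 : ℂ → ℂ} {g : Ω → ℂ},
      Measurable f1 → Measurable f2 → Measurable f3 → Measurable f4 → Measurable f5 →
      Measurable f6 → Measurable f7 →
      (∀ ω, g ω = f1 (u ω) * (f2 (v ω) * (f3 (Φ 0 ω) * (f4 (Φ 1 ω) * (f5 (n 0 ω) *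
        (f6 (n 1 ω) * f7 (nd ω))))))) →
      ∫ ω, g ω ∂μ =
        (∫ ω, f1 (u ω) ∂μ) * ((∫ ω, f2 (v ω) ∂μ) * ((∫ ω, f3 (Φ 0 ω) ∂μ) *
          ((∫ ω, f4 (Φ 1 ω) ∂μ) * ((∫ ω, f5 (n 0 ω) ∂μ) * ((∫ ω, f6 (n 1 ω) ∂μ) *
            (∫ ω, f7 (nd ω) ∂μ)))))) := by
    intro f1 f2 f3 f4 f5 f6 f7 g h1 h2 h3 h4 h5 h6 h7 hg
    rw [show g = (fun ω => f1 (u ω) * (f2 (v ω) * (f3 (Φ 0 ω) * (f4 (Φ 1 ω) * (f5 (n 0 ω) *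
      (f6 (n 1 ω) * f7 (nd ω))))))) from funext hg]
    exact aux_E7 hum hvm (hΦm 0) (hΦm 1) (hnm 0) (hnm 1) hndm hindep h1 h2 h3 h4 h5 h6 h7
  have IPC : ∀ {f1 f2 : (Fin N → ℂ) → ℂ} {f3 f4 : Matrix (Fin N) (Fin N) ℂ → ℂ}
      {f5 f6 f7 : ℂ → ℂ} {g : Ω → ℂ},
      Measurable f1 → Measurable f2 → Measurable f3 → Measurable f4 → Measurable f5 →
      Measurable f6 → Measurable f7 →
      Integrable (fun ω => f1 (u ω)) μ → Integrable (fun ω => f2 (v ω)) μ →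
      Integrable (fun ω => f3 (Φ 0 ω)) μ → Integrable (fun ω => f4 (Φ 1 ω)) μ →
      Integrable (fun ω => f5 (n 0 ω)) μ → Integrable (fun ω => f6 (n 1 ω)) μ →
      Integrable (fun ω => f7 (nd ω)) μ →
      (∀ ω, g ω = f1 (u ω) * (f2 (v ω) * (f3 (Φ 0 ω) * (f4 (Φ 1 ω) * (f5 (n 0 ω) *
        (f6 (n 1 ω) * f7 (nd ω))))))) →
      Integrable g μ := by
    intro f1 f2 f3 f4 f5 f6 f7 g h1 h2 h3 h4 h5 h6 h7 i1 i2 i3 i4 i5 i6 i7 hg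
    exact (aux_I7 hum hvm (hΦm 0) (hΦm 1) (hnm 0) (hnm 1) hndm hindep h1 h2 h3 h4 h5 h6 h7
      i1 i2 i3 i4 i5 i6 i7).congr (Filter.Eventually.of_forall fun ω => (hg ω).symm)
  -- marginal values
  have iuu : ∀ j l, ∫ ω, u ω j * star (u ω l) ∂μ = Ru j l := fun j l => (hRu j l).symm
  have ivv : ∀ i k, ∫ ω, star (v ω i) * v ω k ∂μ = Rv k i := by
    intro i k
    rw [hRv k i]
    congr 1
    funext ω
    ring
  have iΦ : ∀ p (i j : Fin N), ∫ ω, Φ p ω i j ∂μ = EΦ p i j := fun p i j => (hEΦ p i j).symm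
  have iΦs : ∀ p (i j : Fin N), ∫ ω, star (Φ p ω i j) ∂μ = star (EΦ p i j) := by
    intro p i j
    rw [hEΦ p i j]
    exact integral_conj (f := fun ω => Φ p ω i j)
  have humean' : ∀ j, ∫ ω, star (u ω j) ∂μ = 0 := by
    intro j
    have h : ∫ ω, star (u ω j) ∂μ = star (∫ ω, u ω j ∂μ) :=
      integral_conj (f := fun ω => u ω j)
    rw [h, humean j, star_zero]
  have hvmean' : ∀ i, ∫ ω, star (v ω i) ∂μ = 0 := by
    intro i
    have h : ∫ ω, star (v ω i) ∂μ = star (∫ ω, v ω i ∂μ) :=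
      integral_conj (f := fun ω => v ω i)
    rw [h, hvmean i, star_zero]
  have hnmean' : ∀ p, ∫ ω, star (n p ω) ∂μ = 0 := by
    intro p
    have h : ∫ ω, star (n p ω) ∂μ = star (∫ ω, n p ω ∂μ) :=
      integral_conj (f := fun ω => n p ω)
    rw [h, hnmean p, star_zero]
  have hndmean' : ∫ ω, star (nd ω) ∂μ = 0 := by
    have h : ∫ ω, star (nd ω) ∂μ = star (∫ ω, nd ω ∂μ) :=
      integral_conj (f := fun ω => nd ω)
    rw [h, hndmean, star_zero]
  -- the IRS part of the sample
  obtain ⟨s, hs⟩ : ∃ s : Fin 2 → Ω → ℂ, ∀ p ω,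
      s p ω = ∑ q : Fin N × Fin N, star (v ω q.1) * (Φ p ω q.1 q.2 * u ω q.2) :=
    ⟨_, fun p ω => rfl⟩
  have hts : ∀ p ω, t p ω = s p ω + (n p ω - nd ω) := by
    intro p ω
    rw [ht p ω, hs p ω]
    congr 1
    simp [dotProduct, Matrix.mulVec, Finset.mul_sum, Fintype.sum_prod_type, Pi.star_apply]
  -- quadruple expansion of s a * conj (s b)
  have hss : ∀ (a b : Fin 2) (ω : Ω), s a ω * star (s b ω) =
      ∑ q : (Fin N × Fin N) × Fin N × Fin N,
        (u ω q.1.2 * star (u ω q.2.2)) * ((star (v ω q.1.1) * v ω q.2.1) *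
          (Φ a ω q.1.1 q.1.2 * star (Φ b ω q.2.1 q.2.2))) := by
    intro a b ω
    rw [hs a ω, hs b ω, star_sum, Finset.sum_mul_sum]
    rw [Fintype.sum_prod_type (f := fun q : (Fin N × Fin N) × Fin N × Fin N =>
      (u ω q.1.2 * star (u ω q.2.2)) * ((star (v ω q.1.1) * v ω q.2.1) *
        (Φ a ω q.1.1 q.1.2 * star (Φ b ω q.2.1 q.2.2))))]
    refine Finset.sum_congr rfl fun q1 _ => Finset.sum_congr rfl fun q2 _ => ?_
    simp only [star_mul', star_star]
    ring
  -- integrability of s a * conj (s b)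
  have Iss : ∀ a b : Fin 2, Integrable (fun ω => s a ω * star (s b ω)) μ := by
    intro a b
    rw [show (fun ω => s a ω * star (s b ω)) = fun ω =>
      ∑ q : (Fin N × Fin N) × Fin N × Fin N,
        (u ω q.1.2 * star (u ω q.2.2)) * ((star (v ω q.1.1) * v ω q.2.1) *
          (Φ a ω q.1.1 q.1.2 * star (Φ b ω q.2.1 q.2.2))) from funext (hss a b)]
    refine integrable_finset_sum _ (fun q _ => ?_)
    fin_cases a <;> fin_cases b
    · exact IPC (mUU q.1.2 q.2.2) (mVV q.1.1 q.2.1) (mMM q.1.1 q.1.2 q.2.1 q.2.2) m1m m1c m1c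
        m1c (Iuu q.1.2 q.2.2) (Ivv q.1.1 q.2.1) (IΦ2 0 q.1.1 q.1.2 q.2.1 q.2.2) I1 I1 I1 I1
        (fun ω => by (try simp only [Fin.mk_zero, Fin.mk_one]); ring)
    · exact IPC (mUU q.1.2 q.2.2) (mVV q.1.1 q.2.1) (mM q.1.1 q.1.2) (mMs q.2.1 q.2.2) m1c m1c
        m1c (Iuu q.1.2 q.2.2) (Ivv q.1.1 q.2.1) (IΦ1 0 q.1.1 q.1.2) (IΦ1s 1 q.2.1 q.2.2) I1 I1 I1
        (fun ω => by (try simp only [Fin.mk_zero, Fin.mk_one]); ring)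
    · exact IPC (mUU q.1.2 q.2.2) (mVV q.1.1 q.2.1) (mMs q.2.1 q.2.2) (mM q.1.1 q.1.2) m1c m1c
        m1c (Iuu q.1.2 q.2.2) (Ivv q.1.1 q.2.1) (IΦ1s 0 q.2.1 q.2.2) (IΦ1 1 q.1.1 q.1.2) I1 I1 I1
        (fun ω => by (try simp only [Fin.mk_zero, Fin.mk_one]); ring)
    · exact IPC (mUU q.1.2 q.2.2) (mVV q.1.1 q.2.1) m1m (mMM q.1.1 q.1.2 q.2.1 q.2.2) m1c m1c
        m1c (Iuu q.1.2 q.2.2) (Ivv q.1.1 q.2.1) I1 (IΦ2 1 q.1.1 q.1.2 q.2.1 q.2.2) I1 I1 I1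
        (fun ω => by (try simp only [Fin.mk_zero, Fin.mk_one]); ring)
  -- cross terms : s * conj noise
  have Isn : ∀ a b : Fin 2, Integrable (fun ω => s a ω * star (n b ω)) μ := by
    intro a b
    rw [show (fun ω => s a ω * star (n b ω)) = fun ω =>
      ∑ p : Fin N × Fin N, (star (v ω p.1) * (Φ a ω p.1 p.2 * u ω p.2)) * star (n b ω) from
      funext fun ω => by rw [hs a ω]; exact Finset.sum_mul _ _ _]
    refine integrable_finset_sum _ (fun p _ => ?_)
    fin_cases a <;> fin_cases b
    · exact IPC (mUc p.2) (mUs p.1) (mM p.1 p.2) m1m mstc m1c m1c (Iu1 p.2) (Iv1s p.1)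
        (IΦ1 0 p.1 p.2) I1 (In1s 0) I1 I1 (fun ω => by (try simp only [Fin.mk_zero, Fin.mk_one]); ring)
    · exact IPC (mUc p.2) (mUs p.1) (mM p.1 p.2) m1m m1c mstc m1c (Iu1 p.2) (Iv1s p.1)
        (IΦ1 0 p.1 p.2) I1 I1 (In1s 1) I1 (fun ω => by (try simp only [Fin.mk_zero, Fin.mk_one]); ring)
    · exact IPC (mUc p.2) (mUs p.1) m1m (mM p.1 p.2) mstc m1c m1c (Iu1 p.2) (Iv1s p.1)
        I1 (IΦ1 1 p.1 p.2) (In1s 0) I1 I1 (fun ω => by (try simp only [Fin.mk_zero, Fin.mk_one]); ring)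
    · exact IPC (mUc p.2) (mUs p.1) m1m (mM p.1 p.2) m1c mstc m1c (Iu1 p.2) (Iv1s p.1)
        I1 (IΦ1 1 p.1 p.2) I1 (In1s 1) I1 (fun ω => by (try simp only [Fin.mk_zero, Fin.mk_one]); ring)
  have Isnd : ∀ a : Fin 2, Integrable (fun ω => s a ω * star (nd ω)) μ := by
    intro a
    rw [show (fun ω => s a ω * star (nd ω)) = fun ω =>
      ∑ p : Fin N × Fin N, (star (v ω p.1) * (Φ a ω p.1 p.2 * u ω p.2)) * star (nd ω) from
      funext fun ω => by rw [hs a ω]; exact Finset.sum_mul _ _ _]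
    refine integrable_finset_sum _ (fun p _ => ?_)
    fin_cases a
    · exact IPC (mUc p.2) (mUs p.1) (mM p.1 p.2) m1m m1c m1c mstc (Iu1 p.2) (Iv1s p.1)
        (IΦ1 0 p.1 p.2) I1 I1 I1 Ind1s (fun ω => by (try simp only [Fin.mk_zero, Fin.mk_one]); ring)
    · exact IPC (mUc p.2) (mUs p.1) m1m (mM p.1 p.2) m1c m1c mstc (Iu1 p.2) (Iv1s p.1)
        I1 (IΦ1 1 p.1 p.2) I1 I1 Ind1s (fun ω => by (try simp only [Fin.mk_zero, Fin.mk_one]); ring)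
  have Ins : ∀ a b : Fin 2, Integrable (fun ω => n a ω * star (s b ω)) μ := by
    intro a b
    rw [show (fun ω => n a ω * star (s b ω)) = fun ω =>
      ∑ p : Fin N × Fin N, n a ω * star (star (v ω p.1) * (Φ b ω p.1 p.2 * u ω p.2)) from
      funext fun ω => by rw [hs b ω, star_sum]; exact Finset.mul_sum _ _ _]
    refine integrable_finset_sum _ (fun p _ => ?_)
    fin_cases a <;> fin_cases b
    · exact IPC (mUs p.2) (mUc p.1) (mMs p.1 p.2) m1m midc m1c m1c (Iu1s p.2) (Iv1 p.1)
        (IΦ1s 0 p.1 p.2) I1 (In1 0) I1 I1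
        (fun ω => by simp only [star_mul', star_star, Fin.mk_zero, Fin.mk_one]; ring)
    · exact IPC (mUs p.2) (mUc p.1) m1m (mMs p.1 p.2) midc m1c m1c (Iu1s p.2) (Iv1 p.1)
        I1 (IΦ1s 1 p.1 p.2) (In1 0) I1 I1
        (fun ω => by simp only [star_mul', star_star, Fin.mk_zero, Fin.mk_one]; ring)
    · exact IPC (mUs p.2) (mUc p.1) (mMs p.1 p.2) m1m m1c midc m1c (Iu1s p.2) (Iv1 p.1)
        (IΦ1s 0 p.1 p.2) I1 I1 (In1 1) I1
        (fun ω => by simp only [star_mul', star_star, Fin.mk_zero, Fin.mk_one]; ring)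
    · exact IPC (mUs p.2) (mUc p.1) m1m (mMs p.1 p.2) m1c midc m1c (Iu1s p.2) (Iv1 p.1)
        I1 (IΦ1s 1 p.1 p.2) I1 (In1 1) I1
        (fun ω => by simp only [star_mul', star_star, Fin.mk_zero, Fin.mk_one]; ring)
  have Inds : ∀ b : Fin 2, Integrable (fun ω => nd ω * star (s b ω)) μ := by
    intro b
    rw [show (fun ω => nd ω * star (s b ω)) = fun ω =>
      ∑ p : Fin N × Fin N, nd ω * star (star (v ω p.1) * (Φ b ω p.1 p.2 * u ω p.2)) from
      funext fun ω => by rw [hs b ω, star_sum]; exact Finset.mul_sum _ _ _]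
    refine integrable_finset_sum _ (fun p _ => ?_)
    fin_cases b
    · exact IPC (mUs p.2) (mUc p.1) (mMs p.1 p.2) m1m m1c m1c midc (Iu1s p.2) (Iv1 p.1)
        (IΦ1s 0 p.1 p.2) I1 I1 I1 Ind1
        (fun ω => by simp only [star_mul', star_star, Fin.mk_zero, Fin.mk_one]; ring)
    · exact IPC (mUs p.2) (mUc p.1) m1m (mMs p.1 p.2) m1c m1c midc (Iu1s p.2) (Iv1 p.1)
        I1 (IΦ1s 1 p.1 p.2) I1 I1 Ind1
        (fun ω => by simp only [star_mul', star_star, Fin.mk_zero, Fin.mk_one]; ring)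
  -- vanishing of the cross terms
  have Zsn : ∀ a b : Fin 2, ∫ ω, s a ω * star (n b ω) ∂μ = 0 := by
    intro a b
    rw [show (fun ω => s a ω * star (n b ω)) = fun ω =>
      ∑ p : Fin N × Fin N, (star (v ω p.1) * (Φ a ω p.1 p.2 * u ω p.2)) * star (n b ω) from
      funext fun ω => by rw [hs a ω]; exact Finset.sum_mul _ _ _]
    rw [integral_finset_sum _ (fun p _ => by
      fin_cases a <;> fin_cases b
      · exact IPC (mUc p.2) (mUs p.1) (mM p.1 p.2) m1m mstc m1c m1c (Iu1 p.2) (Iv1s p.1)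
          (IΦ1 0 p.1 p.2) I1 (In1s 0) I1 I1 (fun ω => by (try simp only [Fin.mk_zero, Fin.mk_one]); ring)
      · exact IPC (mUc p.2) (mUs p.1) (mM p.1 p.2) m1m m1c mstc m1c (Iu1 p.2) (Iv1s p.1)
          (IΦ1 0 p.1 p.2) I1 I1 (In1s 1) I1 (fun ω => by (try simp only [Fin.mk_zero, Fin.mk_one]); ring)
      · exact IPC (mUc p.2) (mUs p.1) m1m (mM p.1 p.2) mstc m1c m1c (Iu1 p.2) (Iv1s p.1)
          I1 (IΦ1 1 p.1 p.2) (In1s 0) I1 I1 (fun ω => by (try simp only [Fin.mk_zero, Fin.mk_one]); ring)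
      · exact IPC (mUc p.2) (mUs p.1) m1m (mM p.1 p.2) m1c mstc m1c (Iu1 p.2) (Iv1s p.1)
          I1 (IΦ1 1 p.1 p.2) I1 (In1s 1) I1 (fun ω => by (try simp only [Fin.mk_zero, Fin.mk_one]); ring))]
    refine Finset.sum_eq_zero fun p _ => ?_
    fin_cases a <;> fin_cases b
    · rw [EPC (mUc p.2) (mUs p.1) (mM p.1 p.2) m1m mstc m1c m1c (fun ω => by (try simp only [Fin.mk_zero, Fin.mk_one]); ring)]
      simp [humean]
    · rw [EPC (mUc p.2) (mUs p.1) (mM p.1 p.2) m1m m1c mstc m1c (fun ω => by (try simp only [Fin.mk_zero, Fin.mk_one]); ring)]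
      simp [humean]
    · rw [EPC (mUc p.2) (mUs p.1) m1m (mM p.1 p.2) mstc m1c m1c (fun ω => by (try simp only [Fin.mk_zero, Fin.mk_one]); ring)]
      simp [humean]
    · rw [EPC (mUc p.2) (mUs p.1) m1m (mM p.1 p.2) m1c mstc m1c (fun ω => by (try simp only [Fin.mk_zero, Fin.mk_one]); ring)]
      simp [humean]
  have Zsnd : ∀ a : Fin 2, ∫ ω, s a ω * star (nd ω) ∂μ = 0 := by
    intro a
    rw [show (fun ω => s a ω * star (nd ω)) = fun ω =>
      ∑ p : Fin N × Fin N, (star (v ω p.1) * (Φ a ω p.1 p.2 * u ω p.2)) * star (nd ω) from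
      funext fun ω => by rw [hs a ω]; exact Finset.sum_mul _ _ _]
    rw [integral_finset_sum _ (fun p _ => by
      fin_cases a
      · exact IPC (mUc p.2) (mUs p.1) (mM p.1 p.2) m1m m1c m1c mstc (Iu1 p.2) (Iv1s p.1)
          (IΦ1 0 p.1 p.2) I1 I1 I1 Ind1s (fun ω => by (try simp only [Fin.mk_zero, Fin.mk_one]); ring)
      · exact IPC (mUc p.2) (mUs p.1) m1m (mM p.1 p.2) m1c m1c mstc (Iu1 p.2) (Iv1s p.1)
          I1 (IΦ1 1 p.1 p.2) I1 I1 Ind1s (fun ω => by (try simp only [Fin.mk_zero, Fin.mk_one]); ring))]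
    refine Finset.sum_eq_zero fun p _ => ?_
    fin_cases a
    · rw [EPC (mUc p.2) (mUs p.1) (mM p.1 p.2) m1m m1c m1c mstc (fun ω => by (try simp only [Fin.mk_zero, Fin.mk_one]); ring)]
      simp [humean]
    · rw [EPC (mUc p.2) (mUs p.1) m1m (mM p.1 p.2) m1c m1c mstc (fun ω => by (try simp only [Fin.mk_zero, Fin.mk_one]); ring)]
      simp [humean]
  have Zns : ∀ a b : Fin 2, ∫ ω, n a ω * star (s b ω) ∂μ = 0 := by
    intro a b
    rw [show (fun ω => n a ω * star (s b ω)) = fun ω =>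
      ∑ p : Fin N × Fin N, n a ω * star (star (v ω p.1) * (Φ b ω p.1 p.2 * u ω p.2)) from
      funext fun ω => by rw [hs b ω, star_sum]; exact Finset.mul_sum _ _ _]
    rw [integral_finset_sum _ (fun p _ => by
      fin_cases a <;> fin_cases b
      · exact IPC (mUs p.2) (mUc p.1) (mMs p.1 p.2) m1m midc m1c m1c (Iu1s p.2) (Iv1 p.1)
          (IΦ1s 0 p.1 p.2) I1 (In1 0) I1 I1
          (fun ω => by simp only [star_mul', star_star, Fin.mk_zero, Fin.mk_one]; ring)
      · exact IPC (mUs p.2) (mUc p.1) m1m (mMs p.1 p.2) midc m1c m1c (Iu1s p.2) (Iv1 p.1)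
          I1 (IΦ1s 1 p.1 p.2) (In1 0) I1 I1
          (fun ω => by simp only [star_mul', star_star, Fin.mk_zero, Fin.mk_one]; ring)
      · exact IPC (mUs p.2) (mUc p.1) (mMs p.1 p.2) m1m m1c midc m1c (Iu1s p.2) (Iv1 p.1)
          (IΦ1s 0 p.1 p.2) I1 I1 (In1 1) I1
          (fun ω => by simp only [star_mul', star_star, Fin.mk_zero, Fin.mk_one]; ring)
      · exact IPC (mUs p.2) (mUc p.1) m1m (mMs p.1 p.2) m1c midc m1c (Iu1s p.2) (Iv1 p.1)
          I1 (IΦ1s 1 p.1 p.2) I1 (In1 1) I1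
          (fun ω => by simp only [star_mul', star_star, Fin.mk_zero, Fin.mk_one]; ring))]
    refine Finset.sum_eq_zero fun p _ => ?_
    fin_cases a <;> fin_cases b
    · rw [EPC (mUs p.2) (mUc p.1) (mMs p.1 p.2) m1m midc m1c m1c
        (fun ω => by simp only [star_mul', star_star, Fin.mk_zero, Fin.mk_one]; ring)]
      simp only [humean', zero_mul, mul_zero]
    · rw [EPC (mUs p.2) (mUc p.1) m1m (mMs p.1 p.2) midc m1c m1c
        (fun ω => by simp only [star_mul', star_star, Fin.mk_zero, Fin.mk_one]; ring)]
      simp only [humean', zero_mul, mul_zero]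
    · rw [EPC (mUs p.2) (mUc p.1) (mMs p.1 p.2) m1m m1c midc m1c
        (fun ω => by simp only [star_mul', star_star, Fin.mk_zero, Fin.mk_one]; ring)]
      simp only [humean', zero_mul, mul_zero]
    · rw [EPC (mUs p.2) (mUc p.1) m1m (mMs p.1 p.2) m1c midc m1c
        (fun ω => by simp only [star_mul', star_star, Fin.mk_zero, Fin.mk_one]; ring)]
      simp only [humean', zero_mul, mul_zero]
  have Znds : ∀ b : Fin 2, ∫ ω, nd ω * star (s b ω) ∂μ = 0 := by
    intro b
    rw [show (fun ω => nd ω * star (s b ω)) = fun ω =>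
      ∑ p : Fin N × Fin N, nd ω * star (star (v ω p.1) * (Φ b ω p.1 p.2 * u ω p.2)) from
      funext fun ω => by rw [hs b ω, star_sum]; exact Finset.mul_sum _ _ _]
    rw [integral_finset_sum _ (fun p _ => by
      fin_cases b
      · exact IPC (mUs p.2) (mUc p.1) (mMs p.1 p.2) m1m m1c m1c midc (Iu1s p.2) (Iv1 p.1)
          (IΦ1s 0 p.1 p.2) I1 I1 I1 Ind1
          (fun ω => by simp only [star_mul', star_star, Fin.mk_zero, Fin.mk_one]; ring)
      · exact IPC (mUs p.2) (mUc p.1) m1m (mMs p.1 p.2) m1c m1c midc (Iu1s p.2) (Iv1 p.1)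
          I1 (IΦ1s 1 p.1 p.2) I1 I1 Ind1
          (fun ω => by simp only [star_mul', star_star, Fin.mk_zero, Fin.mk_one]; ring))]
    refine Finset.sum_eq_zero fun p _ => ?_
    fin_cases b
    · rw [EPC (mUs p.2) (mUc p.1) (mMs p.1 p.2) m1m m1c m1c midc
        (fun ω => by simp only [star_mul', star_star, Fin.mk_zero, Fin.mk_one]; ring)]
      simp only [humean', zero_mul, mul_zero]
    · rw [EPC (mUs p.2) (mUc p.1) m1m (mMs p.1 p.2) m1c m1c midc
        (fun ω => by simp only [star_mul', star_star, Fin.mk_zero, Fin.mk_one]; ring)]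
      simp only [humean', zero_mul, mul_zero]
  have Znnd : ∀ a : Fin 2, ∫ ω, n a ω * star (nd ω) ∂μ = 0 := by
    intro a
    fin_cases a
    · rw [EPC m1a m1a m1m m1m midc m1c mstc (fun ω => by (try simp only [Fin.mk_zero, Fin.mk_one]); ring)]
      simp [hnmean]
    · rw [EPC m1a m1a m1m m1m m1c midc mstc (fun ω => by (try simp only [Fin.mk_zero, Fin.mk_one]); ring)]
      simp [hnmean]
  have Zndn : ∀ b : Fin 2, ∫ ω, nd ω * star (n b ω) ∂μ = 0 := by
    intro b
    fin_cases b
    · rw [EPC m1a m1a m1m m1m mstc m1c midc (fun ω => by (try simp only [Fin.mk_zero, Fin.mk_one]); ring)]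
      simp [hndmean]
    · rw [EPC m1a m1a m1m m1m m1c mstc midc (fun ω => by (try simp only [Fin.mk_zero, Fin.mk_one]); ring)]
      simp [hndmean]
  -- the master decomposition of the sample correlation
  have master : ∀ a b : Fin 2, ∫ ω, t a ω * star (t b ω) ∂μ =
      (∫ ω, s a ω * star (s b ω) ∂μ) + (∫ ω, n a ω * star (n b ω) ∂μ) + (σd2 : ℂ) := by
    intro a b
    have e : (fun ω => t a ω * star (t b ω)) = fun ω =>
        s a ω * star (s b ω) + s a ω * star (n b ω) - s a ω * star (nd ω)
        + n a ω * star (s b ω) - nd ω * star (s b ω)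
        + n a ω * star (n b ω) - n a ω * star (nd ω) - nd ω * star (n b ω)
        + nd ω * star (nd ω) := by
      funext ω
      rw [hts a ω, hts b ω]
      simp only [star_add, star_sub]
      ring
    calc ∫ ω, t a ω * star (t b ω) ∂μ
        = ∫ ω, (s a ω * star (s b ω) + s a ω * star (n b ω) - s a ω * star (nd ω)
          + n a ω * star (s b ω) - nd ω * star (s b ω)
          + n a ω * star (n b ω) - n a ω * star (nd ω) - nd ω * star (n b ω)
          + nd ω * star (nd ω)) ∂μ := by rw [e]
      _ = (∫ ω, s a ω * star (s b ω) ∂μ) + (∫ ω, s a ω * star (n b ω) ∂μ)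
          - (∫ ω, s a ω * star (nd ω) ∂μ) + (∫ ω, n a ω * star (s b ω) ∂μ)
          - (∫ ω, nd ω * star (s b ω) ∂μ) + (∫ ω, n a ω * star (n b ω) ∂μ)
          - (∫ ω, n a ω * star (nd ω) ∂μ) - (∫ ω, nd ω * star (n b ω) ∂μ)
          + (∫ ω, nd ω * star (nd ω) ∂μ) := by
          have A1 : Integrable (fun ω => s a ω * star (s b ω) + s a ω * star (n b ω)) μ :=
            (Iss a b).add (Isn a b)
          have A2 : Integrable (fun ω => s a ω * star (s b ω) + s a ω * star (n b ω)
              - s a ω * star (nd ω)) μ := A1.sub (Isnd a)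
          have A3 : Integrable (fun ω => s a ω * star (s b ω) + s a ω * star (n b ω)
              - s a ω * star (nd ω) + n a ω * star (s b ω)) μ := A2.add (Ins a b)
          have A4 : Integrable (fun ω => s a ω * star (s b ω) + s a ω * star (n b ω)
              - s a ω * star (nd ω) + n a ω * star (s b ω) - nd ω * star (s b ω)) μ :=
            A3.sub (Inds b)
          have A5 : Integrable (fun ω => s a ω * star (s b ω) + s a ω * star (n b ω)
              - s a ω * star (nd ω) + n a ω * star (s b ω) - nd ω * star (s b ω)
              + n a ω * star (n b ω)) μ := A4.add (Inn a b)
          have A6 : Integrable (fun ω => s a ω * star (s b ω) + s a ω * star (n b ω)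
              - s a ω * star (nd ω) + n a ω * star (s b ω) - nd ω * star (s b ω)
              + n a ω * star (n b ω) - n a ω * star (nd ω)) μ := A5.sub (Innd a)
          have A7 : Integrable (fun ω => s a ω * star (s b ω) + s a ω * star (n b ω)
              - s a ω * star (nd ω) + n a ω * star (s b ω) - nd ω * star (s b ω)
              + n a ω * star (n b ω) - n a ω * star (nd ω) - nd ω * star (n b ω)) μ :=
            A6.sub (Indn b)
          rw [integral_add A7 Indnd, integral_sub A6 (Indn b), integral_sub A5 (Innd a),
            integral_add A4 (Inn a b), integral_sub A3 (Inds b), integral_add A2 (Ins a b),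
            integral_sub A1 (Isnd a), integral_add (Iss a b) (Isn a b)]
      _ = (∫ ω, s a ω * star (s b ω) ∂μ) + (∫ ω, n a ω * star (n b ω) ∂μ) + (σd2 : ℂ) := by
          rw [Zsn a b, Zsnd a, Zns a b, Znds b, Znnd a, Zndn b, hσd]
          ring
  -- value of the pure-IRS cross term
  have key01 : ∫ ω, s 0 ω * star (s 1 ω) ∂μ = (Ru * (EΦ 1)ᴴ * Rv * EΦ 0).trace := by
    calc ∫ ω, s 0 ω * star (s 1 ω) ∂μ
        = ∫ ω, ∑ q : (Fin N × Fin N) × Fin N × Fin N,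
            (u ω q.1.2 * star (u ω q.2.2)) * ((star (v ω q.1.1) * v ω q.2.1) *
              (Φ 0 ω q.1.1 q.1.2 * star (Φ 1 ω q.2.1 q.2.2))) ∂μ := by
          exact integral_congr_ae (Filter.Eventually.of_forall (hss 0 1))
      _ = ∑ q : (Fin N × Fin N) × Fin N × Fin N, ∫ ω,
            (u ω q.1.2 * star (u ω q.2.2)) * ((star (v ω q.1.1) * v ω q.2.1) *
              (Φ 0 ω q.1.1 q.1.2 * star (Φ 1 ω q.2.1 q.2.2))) ∂μ := by
          exact integral_finset_sum _ (fun q _ =>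
            IPC (mUU q.1.2 q.2.2) (mVV q.1.1 q.2.1) (mM q.1.1 q.1.2) (mMs q.2.1 q.2.2) m1c m1c
              m1c (Iuu q.1.2 q.2.2) (Ivv q.1.1 q.2.1) (IΦ1 0 q.1.1 q.1.2) (IΦ1s 1 q.2.1 q.2.2)
              I1 I1 I1 (fun ω => by (try simp only [Fin.mk_zero, Fin.mk_one]); ring))
      _ = ∑ q : (Fin N × Fin N) × Fin N × Fin N,
            Ru q.1.2 q.2.2 * (Rv q.2.1 q.1.1 * (EΦ 0 q.1.1 q.1.2 * star (EΦ 1 q.2.1 q.2.2))) := by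
          refine Finset.sum_congr rfl fun q _ => ?_
          rw [EPC (mUU q.1.2 q.2.2) (mVV q.1.1 q.2.1) (mM q.1.1 q.1.2) (mMs q.2.1 q.2.2) m1c m1c
            m1c (fun ω => by (try simp only [Fin.mk_zero, Fin.mk_one]); ring)]
          simp only [iuu, ivv, iΦ, iΦs, integral_const, measure_univ, ENNReal.toReal_one, probReal_univ,
            one_smul, smul_eq_mul, mul_one]
      _ = (Ru * (EΦ 1)ᴴ * Rv * EΦ 0).trace := aux_traceQuad Ru Rv (EΦ 0) (EΦ 1)
  -- value of the pure-IRS variance term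
  have keyll : ∀ l : Fin 2, ∫ ω, s l ω * star (s l ω) ∂μ =
      ∫ ω, (Ru * (Φ l ω)ᴴ * Rv * Φ l ω).trace ∂μ := by
    intro l
    have e2 : ∀ ω, (Ru * (Φ l ω)ᴴ * Rv * Φ l ω).trace =
        ∑ q : (Fin N × Fin N) × Fin N × Fin N,
          Ru q.1.2 q.2.2 * (Rv q.2.1 q.1.1 * (Φ l ω q.1.1 q.1.2 * star (Φ l ω q.2.1 q.2.2))) :=
      fun ω => (aux_traceQuad Ru Rv (Φ l ω) (Φ l ω)).symm
    calc ∫ ω, s l ω * star (s l ω) ∂μ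
        = ∫ ω, ∑ q : (Fin N × Fin N) × Fin N × Fin N,
            (u ω q.1.2 * star (u ω q.2.2)) * ((star (v ω q.1.1) * v ω q.2.1) *
              (Φ l ω q.1.1 q.1.2 * star (Φ l ω q.2.1 q.2.2))) ∂μ := by
          exact integral_congr_ae (Filter.Eventually.of_forall (hss l l))
      _ = ∑ q : (Fin N × Fin N) × Fin N × Fin N, ∫ ω,
            (u ω q.1.2 * star (u ω q.2.2)) * ((star (v ω q.1.1) * v ω q.2.1) *
              (Φ l ω q.1.1 q.1.2 * star (Φ l ω q.2.1 q.2.2))) ∂μ := by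
          refine integral_finset_sum _ (fun q _ => ?_)
          fin_cases l
          · exact IPC (mUU q.1.2 q.2.2) (mVV q.1.1 q.2.1) (mMM q.1.1 q.1.2 q.2.1 q.2.2) m1m m1c
              m1c m1c (Iuu q.1.2 q.2.2) (Ivv q.1.1 q.2.1) (IΦ2 0 q.1.1 q.1.2 q.2.1 q.2.2) I1 I1
              I1 I1 (fun ω => by (try simp only [Fin.mk_zero, Fin.mk_one]); ring)
          · exact IPC (mUU q.1.2 q.2.2) (mVV q.1.1 q.2.1) m1m (mMM q.1.1 q.1.2 q.2.1 q.2.2) m1c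
              m1c m1c (Iuu q.1.2 q.2.2) (Ivv q.1.1 q.2.1) I1 (IΦ2 1 q.1.1 q.1.2 q.2.1 q.2.2) I1
              I1 I1 (fun ω => by (try simp only [Fin.mk_zero, Fin.mk_one]); ring)
      _ = ∑ q : (Fin N × Fin N) × Fin N × Fin N,
            Ru q.1.2 q.2.2 * (Rv q.2.1 q.1.1 *
              ∫ ω, Φ l ω q.1.1 q.1.2 * star (Φ l ω q.2.1 q.2.2) ∂μ) := by
          refine Finset.sum_congr rfl fun q _ => ?_
          fin_cases l
          · rw [EPC (mUU q.1.2 q.2.2) (mVV q.1.1 q.2.1) (mMM q.1.1 q.1.2 q.2.1 q.2.2) m1m m1c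
              m1c m1c (fun ω => by (try simp only [Fin.mk_zero, Fin.mk_one]); ring)]
            simp only [iuu, ivv, integral_const, measure_univ, ENNReal.toReal_one, probReal_univ, one_smul,
              smul_eq_mul, mul_one, Fin.mk_zero, Fin.mk_one]
          · rw [EPC (mUU q.1.2 q.2.2) (mVV q.1.1 q.2.1) m1m (mMM q.1.1 q.1.2 q.2.1 q.2.2) m1c
              m1c m1c (fun ω => by (try simp only [Fin.mk_zero, Fin.mk_one]); ring)]
            simp only [iuu, ivv, integral_const, measure_univ, ENNReal.toReal_one, probReal_univ, one_smul,
              smul_eq_mul, mul_one, one_mul, Fin.mk_zero, Fin.mk_one]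
      _ = ∑ q : (Fin N × Fin N) × Fin N × Fin N, ∫ ω,
            Ru q.1.2 q.2.2 * (Rv q.2.1 q.1.1 *
              (Φ l ω q.1.1 q.1.2 * star (Φ l ω q.2.1 q.2.2))) ∂μ := by
          refine Finset.sum_congr rfl fun q _ => ?_
          rw [integral_const_mul, integral_const_mul]
      _ = ∫ ω, ∑ q : (Fin N × Fin N) × Fin N × Fin N,
            Ru q.1.2 q.2.2 * (Rv q.2.1 q.1.1 *
              (Φ l ω q.1.1 q.1.2 * star (Φ l ω q.2.1 q.2.2))) ∂μ := by
          refine (integral_finset_sum _ (fun q _ => ?_)).symm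
          exact (((IΦ2 l q.1.1 q.1.2 q.2.1 q.2.2).const_mul (Rv q.2.1 q.1.1)).const_mul
            (Ru q.1.2 q.2.2))
      _ = ∫ ω, (Ru * (Φ l ω)ᴴ * Rv * Φ l ω).trace ∂μ := by
          exact integral_congr_ae (Filter.Eventually.of_forall (fun ω => (e2 ω).symm))
  -- values of the noise correlations
  have keynn : ∀ l : Fin 2, ∫ ω, n l ω * star (n l ω) ∂μ = (σ2 : ℂ) := hσ
  -- conclusion
  have part1 : ∫ ω, t 0 ω * star (t 1 ω) ∂μ
      = (Ru * (EΦ 1)ᴴ * Rv * EΦ 0).trace + (σd2 : ℂ) := by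
    rw [master 0 1, key01, hnuncorr]
    ring
  have part2 : ∀ l : Fin 2, ∫ ω, t l ω * star (t l ω) ∂μ
      = (∫ ω, (Ru * (Φ l ω)ᴴ * Rv * Φ l ω).trace ∂μ) + (σd2 : ℂ) + (σ2 : ℂ) := by
    intro l
    rw [master l l, keyll l, keynn l]
    ring
  refine ⟨part1, part2, fun l => ?_⟩
  rw [part1, part2 l]
end
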